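/- arXiv:2203.05888 — 7 statements merged into one kernel-verified Lean document; each statement's English description precedes it below -/
import Mathlib

section
/- Let G be a digraph with maxdeg(G) < ∞, let Δ ≥ 1 be the maximal vertex degree of Rel(G), and let 𝐑 be a local rule on G. If for every x ∈ V(G) one has 1 − |𝐑(x)|/b^{|Var(x)|} < 1/(eΔ), then there exists a colouring f : V(G) → b that satisfies 𝐑. -/
open MeasureTheory
open scoped Classical ENNReal

namespace MTLLL

variable {V : Type*} {ι : Type*}

/-- The out-neighbourhood `Var(x)` of a vertex `x` in the digraph with edge relation `E`. -/
def Var (E : V → V → Prop) (x : V) : Set V := {y | E x y}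

/-- The in-neighbourhood `Cl(x)`. -/
def Cl (E : V → V → Prop) (x : V) : Set V := {y | E y x}

/-- The neighbourhood `N(x) = Var(x) ∪ Cl(x)`. -/
def Nbr (E : V → V → Prop) (x : V) : Set V := Var E x ∪ Cl E x

/-- The maximal vertex degree of a digraph, as an extended natural number. -/
noncomputable def maxdeg (E : V → V → Prop) : ℕ∞ := ⨆ x : V, (Nbr E x).encard

/-- The digraph `Rel(G)`: edges join vertices whose out-neighbourhoods intersect. -/
def Rel (E : V → V → Prop) (x y : V) : Prop := (Var E x ∩ Var E y).Nonempty

/-- A set is independent in a digraph if no edge other than a self-loop joins two of its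
elements. -/
def Indep (E : V → V → Prop) (I : Set V) : Prop :=
  ∀ x ∈ I, ∀ y ∈ I, x ≠ y → ¬ E x y

/-- `I` is a maximal independent subset of `X`. -/
def MaxIndepIn (E : V → V → Prop) (X I : Set V) : Prop :=
  I ⊆ X ∧ Indep E I ∧ ∀ J : Set V, I ⊆ J → J ⊆ X → Indep E J → J = I

/-- A local rule: for each vertex `x` a set of colourings of `Var(x)` by `b` colours,
imposing no restriction when `Var(x)` is empty. -/
structure LocalRule (E : V → V → Prop) (b : ℕ) where
  R : ∀ x : V, Set (Var E x → Fin b)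
  isFull_of_empty : ∀ x : V, Var E x = ∅ → R x = Set.univ

/-- The complement rule `𝐑ᶜ(x)`. -/
def LocalRule.Rc {E : V → V → Prop} {b : ℕ} (R : LocalRule E b) (x : V) :
    Set (Var E x → Fin b) := (R.R x)ᶜ

/-- A colouring satisfies the rule if at every vertex its restriction to `Var(x)` obeys
`𝐑(x)`. -/
def Satisfies (E : V → V → Prop) {b : ℕ} (R : LocalRule E b) (f : V → Fin b) : Prop :=
  ∀ x : V, (fun y : Var E x => f y.1) ∈ R.R x

/-- The bad set `B(f)` of clauses violated by `f`. -/
def bad (E : V → V → Prop) {b : ℕ} (R : LocalRule E b) (f : V → Fin b) : Set V :=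
  {x : V | (fun y : Var E x => f y.1) ∈ R.Rc x}

/-- The symmetrisation of the digraph, with loops removed, as a simple graph;
it is used to measure graph distances. -/
def toSG (E : V → V → Prop) : SimpleGraph V where
  Adj x y := x ≠ y ∧ (E x y ∨ E y x)
  symm := ⟨fun x y h => ⟨Ne.symm h.1, h.2.symm⟩⟩
  loopless := ⟨fun x h => h.1 rfl⟩

/-- The ball of radius `r` around `x` in graph distance (ignoring orientations). -/
def ball (E : V → V → Prop) (x : V) (r : ℕ) : Set V :=
  {y | ∃ p : (toSG E).Walk x y, p.length ≤ r}

/-- The class `subexp(R,ε,d)`: max degree at most `d` and balls of radius `3R` of size at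
most `(1+ε)^R`. -/
def Subexp (E : V → V → Prop) (Rad d : ℕ) (ε : ℝ) : Prop :=
  maxdeg E ≤ (d : ℕ∞) ∧
  ∀ x : V, (ball E x (3 * Rad)).Finite ∧ ((ball E x (3 * Rad)).ncard : ℝ) ≤ (1 + ε) ^ Rad

/-- A partition (encoded by the map sending a vertex to its part) is `r`-sparse if distinct
vertices in the same part are at graph distance greater than `2r`. -/
def Sparse (E : V → V → Prop) (part : V → ι) (r : ℕ) : Prop :=
  ∀ x y : V, part x = part y → x ≠ y → y ∉ ball E x (2 * r)

/-- An independence function: `I X` is always a maximal independent subset of `X`. -/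
def IndepFun (E : V → V → Prop) (I : Set V → Set V) : Prop :=
  ∀ X : Set V, MaxIndepIn E X (I X)

/-- `Var` of a set of vertices. -/
def VarSet (E : V → V → Prop) (A : Set V) : Set V := ⋃ x ∈ A, Var E x

/-- One run of the Moser–Tardos algorithm: `(mtAux j).1 = MT^j` and `(mtAux j).2 = h^{j+1}`. -/
noncomputable def mtAux (E : V → V → Prop) {b : ℕ} (R : LocalRule E b)
    (part : V → ι) (I : Set V → Set V) (rnd : ι × ℕ → Fin b) :
    ℕ → (V → Fin b) × (V → ℕ)
  | 0 => (fun x => rnd (part x, 0), fun _ => 1)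
  | j + 1 =>
    let p := mtAux E R part I rnd j
    (fun x => if x ∈ VarSet E (I (bad E R p.1)) then rnd (part x, p.2 x) else p.1 x,
     fun x => if x ∈ VarSet E (I (bad E R p.1)) then p.2 x + 1 else p.2 x)

/-- The colouring `MT^j` produced by the Moser–Tardos algorithm. -/
noncomputable def MT (E : V → V → Prop) {b : ℕ} (R : LocalRule E b)
    (part : V → ι) (I : Set V → Set V) (rnd : ι × ℕ → Fin b) (j : ℕ) : V → Fin b :=
  (mtAux E R part I rnd j).1

/-- The resampling counters `h^k`. -/
noncomputable def hres (E : V → V → Prop) {b : ℕ} (R : LocalRule E b)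
    (part : V → ι) (I : Set V → Set V) (rnd : ι × ℕ → Fin b) : ℕ → V → ℕ
  | 0 => fun _ => 0
  | j + 1 => (mtAux E R part I rnd j).2

/-- The total number `h^∞(x)` of resamplings at `x`. -/
noncomputable def hinf (E : V → V → Prop) {b : ℕ} (R : LocalRule E b)
    (part : V → ι) (I : Set V → Set V) (rnd : ι × ℕ → Fin b) (x : V) : ℕ∞ :=
  ⨆ k : ℕ, (hres E R part I rnd k x : ℕ∞)

/-- `μ` is the product over `ι × ℕ` of uniform measures on `Fin b`: it is a probability
measure giving each cylinder set its natural measure. -/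
def IsUnifProduct {ι : Type*} (b : ℕ) (μ : Measure ((ι × ℕ) → Fin b)) : Prop :=
  IsProbabilityMeasure μ ∧
  ∀ (s : Finset (ι × ℕ)) (g : (ι × ℕ) → Fin b),
    μ {rnd | ∀ p ∈ s, rnd p = g p} = (1 / (b : ℝ≥0∞)) ^ s.card

end MTLLL

namespace LLLCore

variable {α : Type*} [Fintype α] {b : ℕ} {ι : Type*} [Fintype ι]

/-- avoid set -/
noncomputable def N (A : ι → Finset (α → Fin b)) (S : Finset ι) : Finset (α → Fin b) :=
  Finset.univ.filter (fun f => ∀ i ∈ S, f ∉ A i)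

lemma mem_N {A : ι → Finset (α → Fin b)} {S : Finset ι} {f : α → Fin b} :
    f ∈ N A S ↔ ∀ i ∈ S, f ∉ A i := by simp [N]

lemma N_anti {A : ι → Finset (α → Fin b)} {S S' : Finset ι} (h : S' ⊆ S) : N A S ⊆ N A S' := by
  intro f hf; rw [mem_N] at *; exact fun i hi => hf i (h hi)

lemma N_insert {A : ι → Finset (α → Fin b)} {S : Finset ι} {j : ι} :
    N A (insert j S) = N A S \ A j := by
  ext f; simp [mem_N, Finset.mem_sdiff]; tauto

/-- merge on u -/
noncomputable def mg (u : Finset α) (f g : α → Fin b) : α → Fin b :=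
  fun a => if a ∈ u then f a else g a

/-- intersection of clause event with avoid set -/
noncomputable def NA (A : ι → Finset (α → Fin b)) (i : ι) (S : Finset ι) : Finset (α → Fin b) :=
  (N A S).filter (fun f => f ∈ A i)

lemma mem_NA {A : ι → Finset (α → Fin b)} {i : ι} {S : Finset ι} {f : α → Fin b} :
    f ∈ NA A i S ↔ f ∈ A i ∧ f ∈ N A S := by simp [NA, and_comm]

lemma independence (A : ι → Finset (α → Fin b)) (vbl : ι → Finset α)
    (hdet : ∀ i, ∀ f g : α → Fin b, (∀ a ∈ vbl i, f a = g a) → f ∈ A i → g ∈ A i)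
    (i : ι) (S : Finset ι) (hdisj : ∀ j ∈ S, Disjoint (vbl i) (vbl j)) :
    ((NA A i S).card) * Fintype.card (α → Fin b) = (A i).card * (N A S).card := by
  classical
  have hNdet : ∀ f g : α → Fin b, (∀ a, a ∉ vbl i → f a = g a) → f ∈ N A S → g ∈ N A S := by
    intro f g hag hf
    rw [mem_N] at *
    intro j hj hgA
    exact hf j hj (hdet j g f (fun a ha => (hag a (Finset.disjoint_right.mp (hdisj j hj) ha)).symm) hgA)
  have key : ((NA A i S) ×ˢ (Finset.univ : Finset (α → Fin b))).card = ((A i) ×ˢ (N A S)).card := by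
    apply Finset.card_nbij' (fun p => (mg (vbl i) p.1 p.2, mg (vbl i) p.2 p.1))
      (fun p => (mg (vbl i) p.1 p.2, mg (vbl i) p.2 p.1))
    · rintro ⟨f, g⟩ hp
      rw [Finset.mem_coe, Finset.mem_product] at hp ⊢
      obtain ⟨hp1, -⟩ := hp
      rw [mem_NA] at hp1
      obtain ⟨hfA, hfN⟩ := hp1
      constructor
      · exact hdet i f _ (fun a ha => by simp [mg, ha]) hfA
      · exact hNdet f _ (fun a ha => by simp [mg, ha]) hfN
    · rintro ⟨f, g⟩ hp
      rw [Finset.mem_coe, Finset.mem_product] at hp ⊢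
      obtain ⟨hfA, hgN⟩ := hp
      refine ⟨mem_NA.mpr ⟨hdet i f _ (fun a ha => by simp [mg, ha]) hfA,
        hNdet g _ (fun a ha => by simp [mg, ha]) hgN⟩, Finset.mem_univ _⟩
    · rintro ⟨f, g⟩ _
      simp only [Prod.mk.injEq]
      constructor <;> (funext a; by_cases ha : a ∈ vbl i <;> simp [mg, ha])
    · rintro ⟨f, g⟩ _
      simp only [Prod.mk.injEq]
      constructor <;> (funext a; by_cases ha : a ∈ vbl i <;> simp [mg, ha])
  simpa [Finset.card_product] using key

lemma one_le_exp_mul_pow (Δ : ℕ) (hΔ1 : 1 ≤ Δ) :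
    1 ≤ Real.exp 1 * (1 - 1/(Δ:ℝ)) ^ (Δ - 1) := by
  obtain ⟨d, rfl⟩ : ∃ d, Δ = 1 + d := ⟨Δ - 1, by omega⟩
  cases d with
  | zero =>
    have := Real.add_one_le_exp (1:ℝ)
    simp only [Nat.add_zero, Nat.cast_one]
    norm_num
  | succ d =>
    have hd1 : (0:ℝ) < (d:ℝ) + 1 := by positivity
    have hd2 : (0:ℝ) < (d:ℝ) + 2 := by positivity
    have h1 : ((d:ℝ)+2)/((d:ℝ)+1) ≤ Real.exp (1/((d:ℝ)+1)) := by
      have h := Real.add_one_le_exp (1/((d:ℝ)+1))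
      have : ((d:ℝ)+2)/((d:ℝ)+1) = 1/((d:ℝ)+1) + 1 := by field_simp; ring
      linarith [this ▸ h]
    have h2 : (((d:ℝ)+2)/((d:ℝ)+1))^(d+1) ≤ Real.exp 1 := by
      calc (((d:ℝ)+2)/((d:ℝ)+1))^(d+1) ≤ (Real.exp (1/((d:ℝ)+1)))^(d+1) :=
            pow_le_pow_left₀ (by positivity) h1 _
        _ = Real.exp (((d:ℕ)+1 : ℕ) * (1/((d:ℝ)+1))) := by
            rw [Real.exp_nat_mul]
        _ = Real.exp 1 := by
            congr 1
            push_cast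
            rw [mul_one_div]
            field_simp
    have hbase : (1 - 1/((1:ℝ)+((d:ℝ)+1))) = ((d:ℝ)+1)/((d:ℝ)+2) := by
      rw [eq_div_iff hd2.ne']
      field_simp
      try ring
      try tauto
    have hexp : (1 + (d+1)) - 1 = d + 1 := by omega
    have hcast : ((1 + (d+1) : ℕ) : ℝ) = 1 + ((d:ℝ)+1) := by push_cast; ring
    rw [hexp, hcast, hbase]
    have hprod : (((d:ℝ)+2)/((d:ℝ)+1))^(d+1) * (((d:ℝ)+1)/((d:ℝ)+2))^(d+1) = 1 := by
      rw [← mul_pow]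
      rw [div_mul_div_comm]
      rw [mul_comm ((d:ℝ)+2)]
      rw [div_self (by positivity)]
      exact one_pow _
    have hpos : (0:ℝ) < (((d:ℝ)+1)/((d:ℝ)+2))^(d+1) := by positivity
    calc (1:ℝ) = (((d:ℝ)+2)/((d:ℝ)+1))^(d+1) * (((d:ℝ)+1)/((d:ℝ)+2))^(d+1) := hprod.symm
      _ ≤ Real.exp 1 * (((d:ℝ)+1)/((d:ℝ)+2))^(d+1) := by
          apply mul_le_mul_of_nonneg_right h2 hpos.le

lemma NA_split (A : ι → Finset (α → Fin b)) (y : ι) (U : Finset ι) :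
    (NA A y U).card + (N A (insert y U)).card = (N A U).card := by
  classical
  rw [N_insert, Finset.sdiff_eq_filter]
  exact Finset.card_filter_add_card_filter_not (fun f => f ∈ A y)

theorem core_lll (hb : 0 < b) (vbl : ι → Finset α) (A : ι → Finset (α → Fin b))
    (Δ : ℕ) (hΔ1 : 1 ≤ Δ)
    (hdet : ∀ i, ∀ f g : α → Fin b, (∀ a ∈ vbl i, f a = g a) → f ∈ A i → g ∈ A i)
    (hdeg : ∀ i, ∀ F : Finset ι, (∀ j ∈ F, ¬ Disjoint (vbl i) (vbl j)) → F.card ≤ Δ)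
    (hself : ∀ i, vbl i = ∅ → A i = ∅)
    (hp : ∀ i, ((A i).card : ℝ) * (Real.exp 1 * Δ) < (b : ℝ) ^ (Fintype.card α)) :
    ∃ f : α → Fin b, ∀ i, f ∉ A i := by
  classical
  set cΩ : ℝ := (Fintype.card (α → Fin b) : ℝ) with hcΩ
  haveI : Nonempty (Fin b) := ⟨⟨0, hb⟩⟩
  have hcΩb : cΩ = (b : ℝ) ^ (Fintype.card α) := by
    rw [hcΩ, Fintype.card_fun, Fintype.card_fin]
    push_cast
    ring
  have hpc : ∀ i, ((A i).card : ℝ) * (Real.exp 1 * Δ) < cΩ := by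
    intro i
    rw [hcΩb]
    exact hp i
  have hΩpos : 0 < cΩ := by
    have h : 0 < Fintype.card (α → Fin b) := Fintype.card_pos
    rw [hcΩ]; exact_mod_cast h
  have hΔR : (0:ℝ) < (Δ:ℝ) := by exact_mod_cast hΔ1
  have hepos : (0:ℝ) < Real.exp 1 := Real.exp_pos 1
  have hbasepos : (0:ℝ) ≤ 1 - 1/(Δ:ℝ) := by
    have : 1/(Δ:ℝ) ≤ 1 := by
      rw [div_le_one hΔR]; exact_mod_cast hΔ1
    linarith
  have hbase1 : (1:ℝ) - 1/(Δ:ℝ) ≤ 1 := by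
    have : (0:ℝ) ≤ 1/(Δ:ℝ) := by positivity
    linarith
  -- main claim
  have claim : ∀ n : ℕ, ∀ S : Finset ι, S.card ≤ n → ∀ i,
      ((NA A i S).card : ℝ) * cΩ ≤ Real.exp 1 * (A i).card * (N A S).card := by
    intro n
    induction n with
    | zero =>
      intro S hS i
      have hSe : S = ∅ := Finset.card_eq_zero.mp (Nat.le_zero.mp hS)
      subst hSe
      have hNu : N A (∅ : Finset ι) = Finset.univ := by ext f; simp [mem_N]
      have hNAu : NA A i (∅ : Finset ι) = A i := by ext f; simp [mem_NA, mem_N]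
      rw [hNu, hNAu, Finset.card_univ]
      have h1e : (1:ℝ) ≤ Real.exp 1 := by
        have := Real.add_one_le_exp (1:ℝ); linarith
      have hAnn : (0:ℝ) ≤ ((A i).card : ℝ) := Nat.cast_nonneg _
      rw [← hcΩ]
      nlinarith [hAnn, hΩpos, mul_nonneg hAnn hΩpos.le]
    | succ n ih =>
      intro S hS i
      by_cases hiS : i ∈ S
      · have : NA A i S = ∅ := by
          ext f; simp only [mem_NA, Finset.notMem_empty, iff_false]
          rintro ⟨hfA, hfN⟩
          exact mem_N.mp hfN i hiS hfA
        rw [this]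
        simp only [Finset.card_empty, Nat.cast_zero, zero_mul]
        positivity
      · by_cases hvi : vbl i = ∅
        · have hAe : A i = ∅ := hself i hvi
          have : NA A i S = ∅ := by
            ext f; simp [mem_NA, hAe]
          rw [this]
          simp only [Finset.card_empty, Nat.cast_zero, zero_mul]
          positivity
        · -- main case
          set S₁ := S.filter (fun j => ¬ Disjoint (vbl i) (vbl j)) with hS₁
          set S₂ := S.filter (fun j => Disjoint (vbl i) (vbl j)) with hS₂
          have hunion : S₂ ∪ S₁ = S := by
            exact Finset.filter_union_filter_not_eq _ S
          have hind := independence A vbl hdet i S₂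
            (fun j hj => (Finset.mem_filter.mp hj).2)
          have hmono : (NA A i S).card ≤ (NA A i S₂).card := by
            apply Finset.card_le_card
            intro f hf
            rw [mem_NA] at hf ⊢
            exact ⟨hf.1, N_anti (Finset.filter_subset _ S) hf.2⟩
          -- sub-induction
          have sub : ∀ S₁' : Finset ι, S₁' ⊆ S₁ →
              ((N A S₂).card : ℝ) * (1 - 1/(Δ:ℝ))^(S₁'.card) ≤ (N A (S₂ ∪ S₁')).card := by
            intro S₁'
            induction S₁' using Finset.induction_on with
            | empty => intro _; simp
            | @insert y S₁'' hy ihsub =>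
              intro hins
              have hyS₁ : y ∈ S₁ := hins (Finset.mem_insert_self _ _)
              have hyS : y ∈ S := (Finset.mem_filter.mp hyS₁).1
              have hsub' : S₁'' ⊆ S₁ := fun z hz => hins (Finset.mem_insert_of_mem hz)
              have hUS : S₂ ∪ S₁'' ⊆ S := by
                intro z hz
                rcases Finset.mem_union.mp hz with h | h
                · exact (Finset.mem_filter.mp h).1
                · exact (Finset.mem_filter.mp (hsub' h)).1
              have hyU : y ∉ S₂ ∪ S₁'' := by
                intro h
                rcases Finset.mem_union.mp h with h | h
                · exact (Finset.mem_filter.mp hyS₁).2 (Finset.mem_filter.mp h).2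
                · exact hy h
              have hUcard : (S₂ ∪ S₁'').card ≤ n := by
                have hsubS : S₂ ∪ S₁'' ⊆ S.erase y := fun z hz =>
                  Finset.mem_erase.mpr ⟨fun e => hyU (e ▸ hz), hUS hz⟩
                have h1 := Finset.card_le_card hsubS
                rw [Finset.card_erase_of_mem hyS] at h1
                omega
              have hIH := ih (S₂ ∪ S₁'') hUcard y
              have hsplit := NA_split A y (S₂ ∪ S₁'')
              -- e * |A y| * Δ < cΩ
              have hpy : ((A y).card : ℝ) * (Real.exp 1 * (Δ:ℝ)) < cΩ := hpc y
              -- (NA A y U).card * Δ ≤ (N A U).card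
              have hkey : ((NA A y (S₂ ∪ S₁'')).card : ℝ) * (Δ:ℝ) ≤ (N A (S₂ ∪ S₁'')).card := by
                have hNnn : (0:ℝ) ≤ ((N A (S₂ ∪ S₁'')).card : ℝ) := Nat.cast_nonneg _
                nlinarith [hIH, hpy, hNnn, hΩpos]
              have hins' : N A (S₂ ∪ insert y S₁'') = N A (insert y (S₂ ∪ S₁'')) := by
                rw [Finset.union_insert]
              have hcard : ((N A (S₂ ∪ insert y S₁'')).card : ℝ)
                  = ((N A (S₂ ∪ S₁'')).card : ℝ) - ((NA A y (S₂ ∪ S₁'')).card : ℝ) := by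
                rw [hins']
                have := hsplit
                push_cast [← this]
                ring
              have hstep : ((N A (S₂ ∪ S₁'')).card : ℝ) * (1 - 1/(Δ:ℝ))
                  ≤ (N A (S₂ ∪ insert y S₁'')).card := by
                rw [hcard]
                have : ((NA A y (S₂ ∪ S₁'')).card : ℝ) ≤ ((N A (S₂ ∪ S₁'')).card : ℝ) / (Δ:ℝ) := by
                  rw [le_div_iff₀ hΔR]; exact hkey
                have hNnn : (0:ℝ) ≤ ((N A (S₂ ∪ S₁'')).card : ℝ) := Nat.cast_nonneg _
                rw [mul_sub, mul_one, mul_one_div]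
                linarith
              have hprev := ihsub hsub'
              rw [Finset.card_insert_of_notMem hy, pow_succ]
              calc ((N A S₂).card : ℝ) * ((1 - 1/(Δ:ℝ))^(S₁''.card) * (1 - 1/(Δ:ℝ)))
                  = (((N A S₂).card : ℝ) * (1 - 1/(Δ:ℝ))^(S₁''.card)) * (1 - 1/(Δ:ℝ)) := by ring
                _ ≤ ((N A (S₂ ∪ S₁'')).card : ℝ) * (1 - 1/(Δ:ℝ)) :=
                    mul_le_mul_of_nonneg_right hprev hbasepos
                _ ≤ (N A (S₂ ∪ insert y S₁'')).card := hstep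
          have hfin1 : ((N A S₂).card : ℝ) * (1 - 1/(Δ:ℝ))^(S₁.card) ≤ (N A S).card := by
            have := sub S₁ (Finset.Subset.refl _)
            rwa [hunion] at this
          -- |S₁| ≤ Δ - 1
          have hS₁card : S₁.card ≤ Δ - 1 := by
            have hiS₁ : i ∉ S₁ := fun h => hiS ((Finset.mem_filter.mp h).1)
            have h1 : (insert i S₁).card ≤ Δ := by
              apply hdeg i
              intro j hj
              rcases Finset.mem_insert.mp hj with rfl | hj'
              · simp only [disjoint_self, Finset.bot_eq_empty]
                exact hvi
              · exact (Finset.mem_filter.mp hj').2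
            rw [Finset.card_insert_of_notMem hiS₁] at h1
            omega
          have hpow : (1 - 1/(Δ:ℝ))^(Δ-1) ≤ (1 - 1/(Δ:ℝ))^(S₁.card) :=
            pow_le_pow_of_le_one hbasepos hbase1 hS₁card
          have hexp1 := one_le_exp_mul_pow Δ hΔ1
          have hfin2 : ((N A S₂).card : ℝ) ≤ Real.exp 1 * (N A S).card := by
            have hNnn : (0:ℝ) ≤ ((N A S₂).card : ℝ) := Nat.cast_nonneg _
            have h1 : ((N A S₂).card : ℝ) * 1 ≤
                ((N A S₂).card : ℝ) * (Real.exp 1 * (1 - 1/(Δ:ℝ))^(S₁.card)) := by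
              apply mul_le_mul_of_nonneg_left _ hNnn
              calc (1:ℝ) ≤ Real.exp 1 * (1 - 1/(Δ:ℝ))^(Δ-1) := hexp1
                _ ≤ Real.exp 1 * (1 - 1/(Δ:ℝ))^(S₁.card) :=
                    mul_le_mul_of_nonneg_left hpow hepos.le
            calc ((N A S₂).card : ℝ) = ((N A S₂).card : ℝ) * 1 := by ring
              _ ≤ ((N A S₂).card : ℝ) * (Real.exp 1 * (1 - 1/(Δ:ℝ))^(S₁.card)) := h1
              _ = Real.exp 1 * (((N A S₂).card : ℝ) * (1 - 1/(Δ:ℝ))^(S₁.card)) := by ring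
              _ ≤ Real.exp 1 * (N A S).card := mul_le_mul_of_nonneg_left hfin1 hepos.le
          calc ((NA A i S).card : ℝ) * cΩ ≤ ((NA A i S₂).card : ℝ) * cΩ := by
                apply mul_le_mul_of_nonneg_right _ hΩpos.le
                exact_mod_cast hmono
            _ = ((A i).card : ℝ) * (N A S₂).card := by
                rw [hcΩ]; exact_mod_cast hind
            _ ≤ ((A i).card : ℝ) * (Real.exp 1 * (N A S).card) :=
                mul_le_mul_of_nonneg_left hfin2 (Nat.cast_nonneg _)
            _ = Real.exp 1 * (A i).card * (N A S).card := by ring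
  -- positivity
  have pos : ∀ S : Finset ι, (0:ℝ) < ((N A S).card : ℝ) := by
    intro S
    induction S using Finset.induction_on with
    | empty =>
      have : N A (∅ : Finset ι) = Finset.univ := by ext f; simp [mem_N]
      rw [this, Finset.card_univ]
      exact hΩpos
    | @insert j S hj ihp =>
      have hsplit := NA_split A j S
      have hc := claim S.card S (le_refl _) j
      have hpj := hpc j
      have hkey : ((NA A j S).card : ℝ) < ((N A S).card : ℝ) := by
        by_contra h
        push_neg at h
        have hApos : (0:ℝ) < ((NA A j S).card : ℝ) := lt_of_lt_of_le ihp h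
        have h1 : ((NA A j S).card : ℝ) * cΩ ≤ Real.exp 1 * (A j).card * (N A S).card := hc
        have h2 : Real.exp 1 * ((A j).card : ℝ) < cΩ := by
          have hΔ1' : (1:ℝ) ≤ (Δ:ℝ) := by exact_mod_cast hΔ1
          have hAnn : (0:ℝ) ≤ ((A j).card : ℝ) := Nat.cast_nonneg _
          nlinarith [hAnn]
        nlinarith
      have : ((N A (insert j S)).card : ℝ)
          = ((N A S).card : ℝ) - ((NA A j S).card : ℝ) := by
        push_cast [← hsplit]
        ring
      rw [this]
      linarith
  have hposuniv := pos Finset.univ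
  have : (N A Finset.univ).Nonempty := by
    rw [← Finset.card_pos]
    exact_mod_cast hposuniv
  obtain ⟨f, hf⟩ := this
  exact ⟨f, fun i => mem_N.mp hf i (Finset.mem_univ i)⟩

end LLLCore


namespace MTLLL
variable {V : Type*}

set_option maxHeartbeats 1000000 in
lemma exists_on_finset (E : V → V → Prop) (b : ℕ) (hb : 1 < b)
    (R : LocalRule E b) (hVarFin : ∀ x : V, (Var E x).Finite)
    (Δ : ℕ) (hΔ1 : 1 ≤ Δ) (hRelDeg : ∀ x : V, (Nbr (Rel E) x).encard ≤ (Δ : ℕ∞))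
    (hmain : ∀ x : V,
      1 - (Nat.card (R.R x) : ℝ) / (b : ℝ) ^ (Var E x).ncard < 1 / (Real.exp 1 * Δ))
    (T : Finset V) :
    ∃ f : V → Fin b, ∀ x ∈ T, (fun y : Var E x => f y.1) ∈ R.R x := by
  classical
  have hb0 : 0 < b := by omega
  set W : Finset V := T.biUnion (fun x => (hVarFin x).toFinset) with hW
  have hWmem : ∀ x ∈ T, ∀ y : V, y ∈ Var E x → y ∈ W := by
    intro x hx y hy
    rw [hW, Finset.mem_biUnion]
    exact ⟨x, hx, (hVarFin x).mem_toFinset.mpr hy⟩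
  let vbl : {x // x ∈ T} → Finset {v // v ∈ W} :=
    fun i => Finset.univ.filter (fun a => (a : V) ∈ Var E i.1)
  let A : {x // x ∈ T} → Finset ({v // v ∈ W} → Fin b) :=
    fun i => Finset.univ.filter
      (fun f => (fun y : Var E i.1 => f ⟨y.1, hWmem i.1 i.2 y.1 y.2⟩) ∈ R.Rc i.1)
  have hdet : ∀ i, ∀ f g : {v // v ∈ W} → Fin b,
      (∀ a ∈ vbl i, f a = g a) → f ∈ A i → g ∈ A i := by
    intro i f g hag hf
    simp only [A, Finset.mem_filter, Finset.mem_univ, true_and] at hf ⊢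
    have heq : (fun y : Var E i.1 => f ⟨y.1, hWmem i.1 i.2 y.1 y.2⟩)
        = (fun y : Var E i.1 => g ⟨y.1, hWmem i.1 i.2 y.1 y.2⟩) := by
      funext y
      apply hag
      simp only [vbl, Finset.mem_filter, Finset.mem_univ, true_and]
      exact y.2
    rwa [heq] at hf
  have hself : ∀ i, vbl i = ∅ → A i = ∅ := by
    intro i hvi
    have hVare : Var E i.1 = ∅ := by
      by_contra h
      obtain ⟨y, hy⟩ := Set.nonempty_iff_ne_empty.mpr h
      have : (⟨y, hWmem i.1 i.2 y hy⟩ : {v // v ∈ W}) ∈ vbl i := by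
        simp only [vbl, Finset.mem_filter, Finset.mem_univ, true_and]
        exact hy
      rw [hvi] at this
      exact Finset.notMem_empty _ this
    have hfull := R.isFull_of_empty i.1 hVare
    ext f
    simp only [A, Finset.mem_filter, Finset.mem_univ, true_and, Finset.notMem_empty,
      iff_false, LocalRule.Rc, hfull, Set.compl_univ]
    exact Set.notMem_empty _
  have hdeg : ∀ i, ∀ Γ : Finset {x // x ∈ T},
      (∀ j ∈ Γ, ¬ Disjoint (vbl i) (vbl j)) → Γ.card ≤ Δ := by
    intro i Γ hΓmem
    have himg : ∀ j ∈ Γ, (j : V) ∈ Nbr (Rel E) (i : V) := by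
      intro j hj
      obtain ⟨a, ha1, ha2⟩ := Finset.not_disjoint_iff.mp (hΓmem j hj)
      simp only [vbl, Finset.mem_filter, Finset.mem_univ, true_and] at ha1 ha2
      have hrel : Rel E (i : V) (j : V) := ⟨a.1, ha1, ha2⟩
      exact Or.inl hrel
    have hcardeq : Γ.card = (Γ.image (Subtype.val)).card :=
      (Finset.card_image_of_injective Γ Subtype.val_injective).symm
    have hsubset : ↑(Γ.image Subtype.val) ⊆ Nbr (Rel E) (i : V) := by
      intro v hv
      simp only [Finset.coe_image, Set.mem_image, Finset.mem_coe] at hv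
      obtain ⟨j, hj, rfl⟩ := hv
      exact himg j hj
    have h1 : ((Γ.image Subtype.val).card : ℕ∞) ≤ (Δ : ℕ∞) := by
      rw [← Set.encard_coe_eq_coe_finsetCard]
      exact le_trans (Set.encard_mono hsubset) (hRelDeg (i : V))
    rw [hcardeq]
    exact_mod_cast h1
  have hp : ∀ i, ((A i).card : ℝ) * (Real.exp 1 * Δ)
      < (b : ℝ) ^ (Fintype.card {v // v ∈ W}) := by
    intro i
    set x := (i : V) with hx
    haveI : Fintype (Var E x) := (hVarFin x).fintype
    set n := Fintype.card (Var E x) with hn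
    set m := Fintype.card {a : {v // v ∈ W} // ¬ ((a : V) ∈ Var E x)} with hm
    have hWx : ∀ y : Var E x, ((y : V) ∈ W) := fun y => hWmem x i.2 y.1 y.2
    -- the equivalence
    have hmemA : ∀ f : {v // v ∈ W} → Fin b,
        f ∈ A i ↔ (fun y : Var E x => f ⟨y.1, hWx y⟩) ∈ R.Rc x := by
      intro f
      simp only [A, Finset.mem_filter, Finset.mem_univ, true_and]
      exact Iff.rfl
    let eqv : {f // f ∈ A i} ≃
        (R.Rc x) × ({a : {v // v ∈ W} // ¬ ((a : V) ∈ Var E x)} → Fin b) :=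
      { toFun := fun F => (⟨fun y => F.1 ⟨y.1, hWx y⟩, (hmemA F.1).mp F.2⟩,
          fun a => F.1 a.1)
        invFun := fun P => ⟨fun a => if h : (a : V) ∈ Var E x then P.1.1 ⟨a.1, h⟩
            else P.2 ⟨a, h⟩, by
          rw [hmemA]
          have heq : (fun y : Var E x => (if h : ((⟨y.1, hWx y⟩ : {v // v ∈ W}) : V) ∈ Var E x
              then P.1.1 ⟨y.1, h⟩ else P.2 ⟨⟨y.1, hWx y⟩, h⟩)) = P.1.1 := by
            funext y
            rw [dif_pos y.2]
          rw [heq]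
          exact P.1.2⟩
        left_inv := by
          intro F
          apply Subtype.ext
          funext a
          by_cases h : (a : V) ∈ Var E x
          · simp only [dif_pos h]
          · simp only [dif_neg h]
        right_inv := by
          intro P
          refine Prod.ext ?_ ?_
          · apply Subtype.ext
            funext y
            simp only []
            rw [dif_pos y.2]
          · funext a
            simp only []
            rw [dif_neg a.2] }
    have hcardA : (A i).card = Nat.card (R.Rc x) * b ^ m := by
      have h1 : Nat.card {f // f ∈ A i} = (A i).card := by
        rw [Nat.card_eq_fintype_card, Fintype.card_coe]
      rw [← h1, Nat.card_congr eqv, Nat.card_prod, Nat.card_fun]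
      congr 1
      rw [Nat.card_eq_fintype_card, Nat.card_eq_fintype_card, Fintype.card_fin, hm]
    have hPn : Fintype.card {a : {v // v ∈ W} // ((a : V) ∈ Var E x)} = n := by
      rw [hn]
      apply Fintype.card_congr
      exact { toFun := fun a => ⟨a.1.1, a.2⟩
              invFun := fun y => ⟨⟨y.1, hWx y⟩, y.2⟩
              left_inv := fun a => Subtype.ext (Subtype.ext rfl)
              right_inv := fun y => Subtype.ext rfl }
    have hcardW : Fintype.card {v // v ∈ W} = n + m := by
      have hcompl : m = Fintype.card {v // v ∈ W}
          - Fintype.card {a : {v // v ∈ W} // ((a : V) ∈ Var E x)} := by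
        rw [hm]
        exact Fintype.card_subtype_compl _
      have hle : Fintype.card {a : {v // v ∈ W} // ((a : V) ∈ Var E x)}
          ≤ Fintype.card {v // v ∈ W} := Fintype.card_subtype_le _
      omega
    -- relation between |Rc| and |R|
    have hRfull : Nat.card (R.R x) + Nat.card (R.Rc x) = b ^ n := by
      have h1 : (R.R x).ncard + (R.R x)ᶜ.ncard = Nat.card (Var E x → Fin b) :=
        Set.ncard_add_ncard_compl _
      have h2 : Nat.card (Var E x → Fin b) = b ^ n := by
        rw [Nat.card_fun, Nat.card_eq_fintype_card, Nat.card_eq_fintype_card,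
          Fintype.card_fin, hn]
      rw [← Nat.card_coe_set_eq, ← Nat.card_coe_set_eq] at h1
      rw [← h2, ← h1]
      rfl
    have hncard : (Var E x).ncard = n := by
      rw [← Nat.card_coe_set_eq, Nat.card_eq_fintype_card, hn]
    -- the real inequality
    have hmx := hmain x
    rw [hncard] at hmx
    have heΔpos : (0:ℝ) < Real.exp 1 * Δ := by
      have : (0:ℝ) < (Δ:ℝ) := by exact_mod_cast hΔ1
      positivity
    have hbn : (0:ℝ) < (b:ℝ) ^ n := by positivity
    have hbm : (0:ℝ) < (b:ℝ) ^ m := by positivity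
    have hRc : ((Nat.card (R.Rc x)) : ℝ) = (b:ℝ) ^ n - Nat.card (R.R x) := by
      have := congrArg (fun k : ℕ => (k : ℝ)) hRfull
      push_cast at this
      linarith
    have hkey : ((Nat.card (R.Rc x)) : ℝ) * (Real.exp 1 * Δ) < (b:ℝ) ^ n := by
      rw [hRc]
      have h3 : (1 - (Nat.card (R.R x) : ℝ) / (b:ℝ)^n) * (Real.exp 1 * Δ) < 1 := by
        have := (lt_div_iff₀ heΔpos).mp hmx
        linarith
      have h4 : ((b:ℝ)^n - Nat.card (R.R x)) = (1 - (Nat.card (R.R x) : ℝ) / (b:ℝ)^n) * (b:ℝ)^n := by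
        field_simp
      rw [h4]
      nlinarith [h3, hbn]
    rw [hcardA, hcardW]
    push_cast
    rw [pow_add]
    nlinarith [hkey, hbm]
  have hconc : ∀ g : {v // v ∈ W} → Fin b, (∀ i, g ∉ A i) →
      ∃ f : V → Fin b, ∀ x ∈ T, (fun y : Var E x => f y.1) ∈ R.R x := by
    intro g hg
    refine ⟨fun v => if h : v ∈ W then g ⟨v, h⟩ else ⟨0, hb0⟩, ?_⟩
    intro x hx
    have hgA := hg ⟨x, hx⟩
    simp only [A, Finset.mem_filter, Finset.mem_univ, true_and] at hgA
    have heq : (fun y : Var E x => (if h : (y : V) ∈ W then g ⟨y.1, h⟩ else ⟨0, hb0⟩))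
        = (fun y : Var E x => g ⟨y.1, hWmem x hx y.1 y.2⟩) := by
      funext y
      rw [dif_pos (hWmem x hx y.1 y.2)]
    rw [heq]
    exact Set.notMem_compl_iff.mp hgA
  clear hW
  clear_value vbl A
  obtain ⟨g, hg⟩ := LLLCore.core_lll hb0 vbl A Δ hΔ1 hdet hdeg hself hp
  exact hconc g hg

end MTLLL


open MTLLL in
/-- **Lovász Local Lemma** (Theorem 1.1): if `maxdeg(G)` is finite, `Δ ≥ 1` is the maximal
degree of `Rel(G)` and `1 - |𝐑(x)|/b^{|Var(x)|} < 1/(eΔ)` for all `x`, then there is a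
satisfying `b`-colouring. -/
theorem lll_exists_satisfying_colouring
    {V : Type*} [Nonempty V] (E : V → V → Prop) (b : ℕ) (hb : 1 < b)
    (R : LocalRule E b) (hfin : maxdeg E < ⊤)
    (Δ : ℕ) (hΔ : maxdeg (Rel E) = (Δ : ℕ∞)) (hΔ1 : 1 ≤ Δ)
    (hmain : ∀ x : V,
      1 - (Nat.card (R.R x) : ℝ) / (b : ℝ) ^ (Var E x).ncard < 1 / (Real.exp 1 * Δ)) :
    ∃ f : V → Fin b, Satisfies E R f := by
  classical
  have hVarFin : ∀ x : V, (Var E x).Finite := by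
    intro x
    have hmd : maxdeg E = ⨆ y : V, (Nbr E y).encard := rfl
    have h1 : (Nbr E x).encard < ⊤ :=
      lt_of_le_of_lt (hmd ▸ le_iSup (fun y : V => (Nbr E y).encard) x) hfin
    have h2 : (Nbr E x).Finite := Set.encard_lt_top_iff.mp h1
    exact h2.subset Set.subset_union_left
  have hRelDeg : ∀ x : V, (Nbr (Rel E) x).encard ≤ (Δ : ℕ∞) := by
    intro x
    rw [← hΔ]
    have hmd : maxdeg (Rel E) = ⨆ y : V, (Nbr (Rel E) y).encard := rfl
    exact hmd ▸ le_iSup (fun y : V => (Nbr (Rel E) y).encard) x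
  have hfins := exists_on_finset E b hb R hVarFin Δ hΔ1 hRelDeg hmain
  -- compactness
  letI : TopologicalSpace (Fin b) := ⊥
  haveI : DiscreteTopology (Fin b) := ⟨rfl⟩
  haveI : CompactSpace (Fin b) := Finite.compactSpace
  set C : V → Set (V → Fin b) := fun x => {f | (fun y : Var E x => f y.1) ∈ R.R x} with hC
  have hclosed : ∀ x, IsClosed (C x) := by
    intro x
    haveI : Finite (Var E x) := (hVarFin x).to_subtype
    have hcont : Continuous (fun (f : V → Fin b) => (fun y : Var E x => f y.1)) :=
      continuous_pi (fun y => continuous_apply y.1)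
    have hCeq : C x = (fun f : V → Fin b => (fun y : Var E x => f y.1)) ⁻¹' (R.R x) := rfl
    rw [hCeq]
    exact (isClosed_discrete _).preimage hcont
  by_contra hcon
  push_neg at hcon
  have hempty : (Set.univ : Set (V → Fin b)) ∩ ⋂ x : V, C x = ∅ := by
    rw [Set.eq_empty_iff_forall_notMem]
    rintro f ⟨-, hf⟩
    rw [Set.mem_iInter] at hf
    exact hcon f (fun x => hf x)
  obtain ⟨T, hT⟩ := IsCompact.elim_finite_subfamily_closed isCompact_univ C hclosed hempty
  obtain ⟨f, hf⟩ := hfins T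
  have hfmem : f ∈ (Set.univ : Set (V → Fin b)) ∩ ⋂ x ∈ T, C x := by
    refine ⟨trivial, ?_⟩
    rw [Set.mem_iInter₂]
    exact fun x hx => hf x hx
  rw [hT] at hfmem
  exact hfmem
end

section
/- Let (G,𝐑,π) be a Moser–Tardos tuple with G a finite digraph, fix an independence function on Rel(G), and let rnd ∈ b^{π×ℕ}. If h^∞(x) < ∞ for every x ∈ V(G), then there exists i ∈ ℕ with B(MT^i) = ∅; in particular MT^i satisfies 𝐑 and MT^j = MT^i for all j ≥ i. -/
open MeasureTheory
open scoped Classical ENNReal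

section Aux
open MTLLL

variable {V : Type*} {ι : Type*}

lemma aux_var_nonempty_of_bad (E : V → V → Prop) {b : ℕ} (R : LocalRule E b)
    (f : V → Fin b) {x : V} (hx : x ∈ bad E R f) : (Var E x).Nonempty := by
  by_contra h
  rw [Set.not_nonempty_iff_eq_empty] at h
  have := R.isFull_of_empty x h
  simp [bad, LocalRule.Rc, this] at hx

lemma aux_I_empty {E' : V → V → Prop} {I : Set V → Set V} (hI : IndepFun E' I) :
    I ∅ = ∅ :=
  Set.subset_empty_iff.mp (hI ∅).1

lemma aux_varset_empty (E : V → V → Prop) : VarSet E (∅ : Set V) = ∅ := by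
  simp [VarSet]

lemma aux_bad_empty_of_varset (E : V → V → Prop) {b : ℕ} (R : LocalRule E b)
    {I : Set V → Set V} (hI : IndepFun (Rel E) I) (f : V → Fin b)
    (h : VarSet E (I (bad E R f)) = ∅) : bad E R f = ∅ := by
  by_contra hne
  rw [← Set.not_nonempty_iff_eq_empty, not_not] at hne
  obtain ⟨x, hx⟩ := hne
  obtain ⟨hsub, hind, hmax⟩ := hI (bad E R f)
  -- I (bad) is nonempty
  have hne' : (I (bad E R f)).Nonempty := by
    by_contra hI0
    rw [Set.not_nonempty_iff_eq_empty] at hI0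
    have h1 : ({x} : Set V) = I (bad E R f) := by
      apply hmax
      · rw [hI0]; exact Set.empty_subset _
      · simpa using hx
      · intro a ha c hc hac
        simp only [Set.mem_singleton_iff] at ha hc
        exact absurd (ha.trans hc.symm) hac
    rw [hI0] at h1
    exact Set.singleton_ne_empty x h1
  obtain ⟨y, hy⟩ := hne'
  obtain ⟨z, hz⟩ := aux_var_nonempty_of_bad E R f (hsub hy)
  have : z ∈ VarSet E (I (bad E R f)) := by
    exact Set.mem_biUnion hy hz
  rw [h] at this
  exact this
end Aux

open MTLLL in
/-- If in a run of the Moser–Tardos algorithm on a finite digraph every vertex is resampled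
only finitely often, then the algorithm succeeds: some `MT^i` has empty bad set, satisfies
the rule, and the run stabilises at `MT^i`. -/
theorem mt_success_of_hinf_finite
    {V : Type*} [Nonempty V] [Fintype V] {ι : Type*} [Finite ι]
    (E : V → V → Prop) (b : ℕ) (hb : 1 < b) (R : LocalRule E b) (part : V → ι)
    (I : Set V → Set V) (hI : IndepFun (Rel E) I) (rnd : ι × ℕ → Fin b)
    (hfin : ∀ x : V, hinf E R part I rnd x < ⊤) :
    ∃ i : ℕ, bad E R (MT E R part I rnd i) = ∅ ∧
      Satisfies E R (MT E R part I rnd i) ∧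
      ∀ j : ℕ, i ≤ j → MT E R part I rnd j = MT E R part I rnd i := by
  classical
  -- hres is monotone in k
  have hmono : ∀ x : V, ∀ k : ℕ,
      hres E R part I rnd k x ≤ hres E R part I rnd (k+1) x := by
    intro x k
    cases k with
    | zero => simp [hres]
    | succ j =>
      show (mtAux E R part I rnd j).2 x ≤ (mtAux E R part I rnd (j+1)).2 x
      simp only [mtAux]
      split_ifs <;> omega
  have hmono' : ∀ x : V, Monotone (fun k => hres E R part I rnd k x) := by
    intro x
    exact monotone_nat_of_le_succ (hmono x)
  -- for each x, choose a stabilisation index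
  have hstab : ∀ x : V, ∃ k0 : ℕ, ∀ k, k0 ≤ k →
      hres E R part I rnd k x = hres E R part I rnd k0 x := by
    intro x
    obtain ⟨N, hN⟩ := WithTop.ne_top_iff_exists.mp (hfin x).ne
    have hbd : ∀ k, hres E R part I rnd k x ≤ N := by
      intro k
      have h1 : (hres E R part I rnd k x : ℕ∞) ≤ hinf E R part I rnd x :=
        le_iSup (fun k => (hres E R part I rnd k x : ℕ∞)) k
      rw [← hN] at h1
      exact Nat.cast_le.mp h1
    have hmem : sSup (Set.range (fun k => hres E R part I rnd k x)) ∈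
        Set.range (fun k => hres E R part I rnd k x) := by
      apply Nat.sSup_mem ⟨_, Set.mem_range_self 0⟩
      exact ⟨N, by rintro n ⟨k, rfl⟩; exact hbd k⟩
    obtain ⟨k0, hk0⟩ := hmem
    have hk0' : hres E R part I rnd k0 x =
        sSup (Set.range (fun k => hres E R part I rnd k x)) := hk0
    refine ⟨k0, fun k hk => le_antisymm ?_ (hmono' x hk)⟩
    rw [hk0']
    exact le_csSup ⟨N, by rintro n ⟨k', rfl⟩; exact hbd k'⟩ (Set.mem_range_self k)
  choose k0 hk0 using hstab
  set i := Finset.univ.sup k0 with hi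
  -- at step i, no vertex is resampled
  have hnov : VarSet E (I (bad E R (MT E R part I rnd i))) = ∅ := by
    rw [Set.eq_empty_iff_forall_notMem]
    intro x hx
    have h1 : hres E R part I rnd (i+2) x = hres E R part I rnd (i+1) x := by
      have hle : k0 x ≤ i := Finset.le_sup (Finset.mem_univ x)
      rw [hk0 x (i+2) (by omega), hk0 x (i+1) (by omega)]
    have h2 : hres E R part I rnd (i+2) x = hres E R part I rnd (i+1) x + 1 := by
      show (mtAux E R part I rnd (i+1)).2 x = (mtAux E R part I rnd i).2 x + 1
      simp only [mtAux]
      exact if_pos hx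
    omega
  have hbadempty : bad E R (MT E R part I rnd i) = ∅ :=
    aux_bad_empty_of_varset E R hI _ hnov
  refine ⟨i, hbadempty, ?_, ?_⟩
  · intro x
    have : x ∉ bad E R (MT E R part I rnd i) := by rw [hbadempty]; exact id
    simpa [bad, LocalRule.Rc] using this
  · intro j hj
    induction j with
    | zero =>
      have : i = 0 := Nat.le_zero.mp hj
      rw [this]
    | succ m ih =>
      rcases Nat.lt_or_ge i (m+1) with h | h
      · have hm : i ≤ m := Nat.lt_succ_iff.mp h
        have heq := ih hm
        show (mtAux E R part I rnd (m+1)).1 = MT E R part I rnd i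
        funext x
        simp only [mtAux]
        rw [if_neg]
        · exact congrFun heq x
        · rw [show (mtAux E R part I rnd m).1 = MT E R part I rnd i from heq,
            hbadempty, aux_I_empty hI, aux_varset_empty]
          exact Set.notMem_empty x
      · have : i = m + 1 := le_antisymm hj h
        rw [this]
end

section
/- Let G be a finite digraph, let M = (G,𝐑,π) be a Moser–Tardos tuple in which π is the partition of V(G) into singletons, let Δ := maxdeg(Rel(G)) ≥ 1 and d := max_{x∈V(G)} |Var(x)|. Suppose δ > 0 satisfies max_{x∈V(G)} |𝐑^c(x)|/b^{|Var(x)|} ≤ 1/(eΔ)^{1+δ}. Then for every independence function on Rel(G), every total order on V(G), and all m,k ∈ ℕ: Pr_rnd( |V(L^k_{M,rnd})| = m ) ≤ d·|V(G)|·(m+1)^{|V(G)|}/(eΔ)^{δm}. -/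
open MeasureTheory
open scoped Classical ENNReal

namespace MTLLL

variable {V : Type*} {ι : Type*}

/-- A `G`-forest: a subdigraph of `Canvas(G)` (vertices `V × ℕ`, edges going up one level
between `Rel`-adjacent vertices) in which every vertex has in-degree `0` or `1`. -/
structure GForest (E : V → V → Prop) where
  verts : Set (V × ℕ)
  edges : V × ℕ → V × ℕ → Prop
  edges_mem_left : ∀ a c : V × ℕ, edges a c → a ∈ verts
  edges_mem_right : ∀ a c : V × ℕ, edges a c → c ∈ verts
  edges_rel : ∀ a c : V × ℕ, edges a c → Rel E a.1 c.1
  edges_level : ∀ a c : V × ℕ, edges a c → c.2 = a.2 + 1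
  indeg_le_one : ∀ c a a' : V × ℕ, edges a c → edges a' c → a = a'

/-- A forest is grounded if every root (in-degree `0` vertex) has level `0`. -/
def GForest.Grounded {E : V → V → Prop} (F : GForest E) : Prop :=
  ∀ a ∈ F.verts, (∀ a' : V × ℕ, ¬ F.edges a' a) → a.2 = 0

/-- A forest has finite height if its levels are bounded. -/
def GForest.FinHeight {E : V → V → Prop} (F : GForest E) : Prop :=
  ∃ j : ℕ, ∀ a ∈ F.verts, a.2 < j

/-- A forest is independent if each of its level sets is independent in `Rel(G)`. -/
def GForest.LevelIndep {E : V → V → Prop} (F : GForest E) : Prop :=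
  ∀ i : ℕ, Indep (Rel E) {x : V | (x, i) ∈ F.verts}

/-- `varcount(F) = |V(G)| + Σ_{(x,i) ∈ V(F)} |Var(x)|`. -/
noncomputable def GForest.varcount {E : V → V → Prop} (F : GForest E) : ℕ :=
  Nat.card V + ∑ᶠ a ∈ F.verts, (Var E (Prod.fst a)).ncard

/-- The set of roots of airborne trees (trees whose root has positive level). -/
def airborneRoots {E : V → V → Prop} (F : GForest E) : Set (V × ℕ) :=
  {a ∈ F.verts | (∀ a' : V × ℕ, ¬ F.edges a' a) ∧ 0 < a.2}

/-- A finalised `M`-landscape: an independent `G`-forest of finite height together with a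
violation datum `vio (x,i) ∈ 𝐑ᶜ(x)` at each of its vertices, and a final colouring. -/
structure FinLandscape (E : V → V → Prop) (b : ℕ) (R : LocalRule E b) where
  F : GForest E
  levelIndep : F.LevelIndep
  finHeight : F.FinHeight
  vio : ∀ a : F.verts, Var E (a : V × ℕ).1 → Fin b
  vio_not_mem : ∀ a : F.verts, vio a ∈ R.Rc (a : V × ℕ).1
  fin : V → Fin b

/-- The sequence `Used_L(x)`: the values `vio(y,s)(x)` over the (at most one per level)
vertices `(y,s)` of the forest with `x ∈ Var(y)`, in increasing order of level, followed by
the final value `fin x`. -/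
noncomputable def FinLandscape.Used {E : V → V → Prop} {b : ℕ} {R : LocalRule E b}
    (L : FinLandscape E b R) (x : V) : List (Fin b) :=
  ((List.range (Nat.find L.finHeight)).filterMap fun i =>
    if h : ∃ y : V, ∃ _ : (y, i) ∈ L.F.verts, x ∈ Var E y then
      some (L.vio ⟨(h.choose, i), h.choose_spec.choose⟩ ⟨x, h.choose_spec.choose_spec⟩)
    else none) ++ [L.fin x]

/-- The finalised landscape `L^k` associated to a run of the Moser–Tardos algorithm
(relative to a linear order used to pick parents in the forest). -/
noncomputable def runLandscape (E : V → V → Prop) {b : ℕ} (R : LocalRule E b)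
    (part : V → ι) {I : Set V → Set V} (hI : IndepFun (Rel E) I)
    (rnd : ι × ℕ → Fin b) (lo : LinearOrder V) (k : ℕ) :
    FinLandscape E b R where
  F :=
    { verts := {a : V × ℕ | a.2 < k ∧ a.1 ∈ I (bad E R (MT E R part I rnd a.2))}
      edges := fun a c =>
        (c.2 < k ∧ c.1 ∈ I (bad E R (MT E R part I rnd c.2))) ∧ c.2 = a.2 + 1 ∧
        (a.1 ∈ I (bad E R (MT E R part I rnd a.2)) ∧ (Var E a.1 ∩ Var E c.1).Nonempty) ∧
        ∀ z : V, z ∈ I (bad E R (MT E R part I rnd a.2)) →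
          (Var E z ∩ Var E c.1).Nonempty → lo.le a.1 z
      edges_mem_left := by
        rintro a c ⟨⟨hck, -⟩, hlev, ⟨haI, -⟩, -⟩
        exact ⟨by omega, haI⟩
      edges_mem_right := fun a c h => h.1
      edges_rel := fun a c h => h.2.2.1.2
      edges_level := fun a c h => h.2.1
      indeg_le_one := by
        rintro c a a' ⟨-, hlev, ⟨haI, haV⟩, hmin⟩ ⟨-, hlev', ⟨haI', haV'⟩, hmin'⟩
        have h2 : a.2 = a'.2 := by omega
        rw [h2] at haI hmin
        have h1 : a.1 = a'.1 := lo.le_antisymm _ _ (hmin _ haI' haV') (hmin' _ haI haV)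
        exact Prod.ext h1 h2 }
  levelIndep := by
    intro i x hx y hy hxy
    exact (hI (bad E R (MT E R part I rnd i))).2.1 x hx.2 y hy.2 hxy
  finHeight := ⟨k, fun a ha => ha.1⟩
  vio := fun a => fun y => MT E R part I rnd (a : V × ℕ).2 y.1
  vio_not_mem := fun a => (hI (bad E R (MT E R part I rnd (a : V × ℕ).2))).1 a.2.2
  fin := MT E R part I rnd k

end MTLLL

namespace MTLLLProof
open MTLLL

variable {V : Type*} [Fintype V] (E : V → V → Prop) {b : ℕ} (R : LocalRule E b)
  (I : Set V → Set V) (rnd : V × ℕ → Fin b)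

/-- x gets resampled at step i -/
def res (i : ℕ) (x : V) : Prop := x ∈ VarSet E (I (bad E R (MT E R (id : V → V) I rnd i)))

/-- number of resamplings of x before step j -/
noncomputable def cnt (j : ℕ) (x : V) : ℕ :=
  ((Finset.range j).filter (fun i => res E R I rnd i x)).card

lemma cnt_succ (j : ℕ) (x : V) :
    cnt E R I rnd (j+1) x = if res E R I rnd j x then cnt E R I rnd j x + 1
      else cnt E R I rnd j x := by
  unfold cnt
  rw [Finset.range_add_one, Finset.filter_insert]
  split <;> simp [Finset.mem_filter]

lemma mt_spec (j : ℕ) (x : V) :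
    MT E R (id : V → V) I rnd j x = rnd (x, cnt E R I rnd j x) ∧
      (mtAux E R (id : V → V) I rnd j).2 x = cnt E R I rnd j x + 1 := by
  induction j with
  | zero => simp [MT, mtAux, cnt]
  | succ j ih =>
    have h1 : MT E R (id : V → V) I rnd (j+1) x =
        if res E R I rnd j x then rnd (x, (mtAux E R (id : V → V) I rnd j).2 x)
        else MT E R (id : V → V) I rnd j x := by
      rfl
    have h2 : (mtAux E R (id : V → V) I rnd (j+1)).2 x =
        if res E R I rnd j x then (mtAux E R (id : V → V) I rnd j).2 x + 1
        else (mtAux E R (id : V → V) I rnd j).2 x := by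
      rfl
    rw [h1, h2, cnt_succ, ih.1, ih.2]
    by_cases h : res E R I rnd j x <;> simp_all

lemma mt_eq (j : ℕ) (x : V) :
    MT E R (id : V → V) I rnd j x = rnd (x, cnt E R I rnd j x) :=
  (mt_spec E R I rnd j x).1

/-- a bad vertex has nonempty Var -/
lemma var_nonempty_of_bad {f : V → Fin b} {x : V} (hx : x ∈ bad E R f) :
    (Var E x).Nonempty := by
  rw [Set.nonempty_iff_ne_empty]
  intro h
  have := R.isFull_of_empty x h
  simp [bad, LocalRule.Rc, this] at hx

/-- groundedness: an element of IB at step i+1 has a Rel-neighbour in IB at step i -/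
lemma grounded_step (hI : IndepFun (Rel E) I) {i : ℕ} {x : V}
    (hx : x ∈ I (bad E R (MT E R (id : V → V) I rnd (i+1)))) :
    ∃ z ∈ I (bad E R (MT E R (id : V → V) I rnd i)), (Var E z ∩ Var E x).Nonempty := by
  by_contra h
  have hno : ∀ z ∈ I (bad E R (MT E R (id : V → V) I rnd i)), ∀ w,
      ¬ (w ∈ Var E z ∧ w ∈ Var E x) := by
    intro z hz w hw
    exact h ⟨z, hz, ⟨w, hw.1, hw.2⟩⟩
  set f := MT E R (id : V → V) I rnd i with hf
  -- colours on Var x unchanged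
  have hsame : ∀ w ∈ Var E x, MT E R (id : V → V) I rnd (i+1) w = f w := by
    intro w hw
    have hnotin : w ∉ VarSet E (I (bad E R f)) := by
      intro hw'
      obtain ⟨z, hz, hwz⟩ := by
        simpa [VarSet] using hw'
      exact hno z hz w ⟨hwz, hw⟩
    show (mtAux E R (id : V → V) I rnd (i+1)).1 w = f w
    simp only [mtAux]
    rw [show (mtAux E R (id : V → V) I rnd i).1 = f from rfl, if_neg hnotin]
  have hxbad1 : x ∈ bad E R (MT E R (id : V → V) I rnd (i+1)) :=
    (hI _).1 hx
  have hxbad : x ∈ bad E R f := by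
    have : (fun y : Var E x => MT E R (id : V → V) I rnd (i+1) y.1)
        = (fun y : Var E x => f y.1) := by
      funext y; exact hsame y.1 y.2
    simpa [bad, this] using hxbad1
  -- x must be in I (bad f) by maximality
  obtain ⟨hsub, hind, hmax⟩ := hI (bad E R f)
  have hxI : x ∈ I (bad E R f) := by
    have hJ : I (bad E R f) ∪ {x} = I (bad E R f) := by
      apply hmax
      · exact Set.subset_union_left
      · intro y hy
        rcases hy with hy | hy
        · exact hsub hy
        · rw [Set.mem_singleton_iff] at hy; subst hy; exact hxbad
      · intro u hu v hv huv hrel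
        rcases hu with hu | hu <;> rcases hv with hv | hv
        · exact hind u hu v hv huv hrel
        · rw [Set.mem_singleton_iff] at hv; subst hv
          · obtain ⟨w, hw1, hw2⟩ := hrel
            exact hno u hu w ⟨hw1, hw2⟩
        · rw [Set.mem_singleton_iff] at hu; subst hu
          · obtain ⟨w, hw1, hw2⟩ := hrel
            exact hno v hv w ⟨hw2, hw1⟩
        · simp only [Set.mem_singleton_iff] at hu hv; exact huv (hu.trans hv.symm)
    rw [← hJ]; exact Set.mem_union_right _ rfl
  obtain ⟨w, hw⟩ := var_nonempty_of_bad E R hxbad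
  exact hno x hxI w ⟨hw, hw⟩

end MTLLLProof
namespace MTLLLProof
open MTLLL

variable {V : Type*} [Fintype V] (E : V → V → Prop)

noncomputable def varF (y : V) : Finset V := Set.Finite.toFinset (Set.toFinite (Var E y))

lemma mem_varF {y x : V} : x ∈ varF E y ↔ x ∈ Var E y := Set.Finite.mem_toFinset _

lemma card_varF (y : V) : (varF E y).card = (Var E y).ncard :=
  (Set.ncard_eq_toFinset_card _ _).symm

/-- admissible vertex sets -/
def Adm (m : ℕ) (S : Finset (V × ℕ)) : Prop :=
  S.card = m ∧
  (∀ a ∈ S, ∀ a' ∈ S, a.2 = a'.2 → a ≠ a' → ¬ Rel E a.1 a'.1) ∧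
  (∀ a ∈ S, ∀ i : ℕ, a.2 = i + 1 → ∃ z, (z, i) ∈ S ∧ Rel E z a.1) ∧
  (∀ a ∈ S, (Var E a.1).Nonempty)

/-- number of levels `< i` at which `x` lies in the Var of an `S`-vertex -/
noncomputable def cS (S : Finset (V × ℕ)) (i : ℕ) (x : V) : ℕ :=
  ((Finset.range i).filter (fun j => ∃ y, (y, j) ∈ S ∧ x ∈ Var E y)).card

lemma cS_lt (S : Finset (V × ℕ)) {i i' : ℕ} (h : i < i') {y x : V}
    (hy : (y, i) ∈ S) (hx : x ∈ Var E y) : cS E S i x < cS E S i' x := by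
  apply Finset.card_lt_card
  constructor
  · apply Finset.filter_subset_filter
    exact Finset.range_subset_range.2 h.le
  · intro hsub
    have : i ∈ (Finset.range i).filter (fun j => ∃ y, (y, j) ∈ S ∧ x ∈ Var E y) := by
      apply hsub
      simp only [Finset.mem_filter, Finset.mem_range]
      exact ⟨h, y, hy, hx⟩
    simp [Finset.mem_filter] at this

/-- the coordinate used by the violation at `a` in variable `x` -/
noncomputable def coord (S : Finset (V × ℕ)) (a : V × ℕ) (x : V) : V × ℕ :=
  (x, cS E S a.2 x)

lemma coord_inj {S : Finset (V × ℕ)}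
    (hind : ∀ a ∈ S, ∀ a' ∈ S, a.2 = a'.2 → a ≠ a' → ¬ Rel E a.1 a'.1)
    {a a' : V × ℕ} (ha : a ∈ S) (ha' : a' ∈ S) {x x' : V}
    (hx : x ∈ Var E a.1) (hx' : x' ∈ Var E a'.1)
    (he : coord E S a x = coord E S a' x') : a = a' ∧ x = x' := by
  have hxx : x = x' := congrArg Prod.fst he
  subst hxx
  have hc : cS E S a.2 x = cS E S a'.2 x := congrArg Prod.snd he
  rcases lt_trichotomy a.2 a'.2 with hlt | heq | hgt
  · exact absurd hc (Nat.ne_of_lt (cS_lt E S hlt (by rwa [← Prod.mk.eta (p := a)] at ha) hx))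
  · refine ⟨?_, rfl⟩
    by_contra hne
    exact hind a ha a' ha' heq hne ⟨x, hx, hx'⟩
  · exact absurd hc.symm
      (Nat.ne_of_lt (cS_lt E S hgt (by rwa [← Prod.mk.eta (p := a')] at ha') hx'))

/-- the set of coordinates determined by `S` -/
noncomputable def TS (S : Finset (V × ℕ)) : Finset (V × ℕ) :=
  S.biUnion (fun a => (varF E a.1).image (fun x => coord E S a x))

lemma mem_TS {S : Finset (V × ℕ)} {p : V × ℕ} :
    p ∈ TS E S ↔ ∃ a ∈ S, ∃ x ∈ Var E a.1, coord E S a x = p := by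
  simp [TS, mem_varF]

lemma card_TS {S : Finset (V × ℕ)}
    (hind : ∀ a ∈ S, ∀ a' ∈ S, a.2 = a'.2 → a ≠ a' → ¬ Rel E a.1 a'.1) :
    (TS E S).card = ∑ a ∈ S, (Var E a.1).ncard := by
  rw [TS, Finset.card_biUnion]
  · refine Finset.sum_congr rfl fun a ha => ?_
    rw [← card_varF]
    apply Finset.card_image_of_injOn
    intro x hx x' hx' hxy
    exact ((coord_inj E hind ha ha ((mem_varF E).1 hx) ((mem_varF E).1 hx') hxy)).2
  · intro a ha a' ha' hne
    simp only [Finset.disjoint_left, Finset.mem_image]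
    rintro p ⟨x, hx, rfl⟩ ⟨x', hx', he⟩
    exact hne (coord_inj E hind ha' ha ((mem_varF E).1 hx') ((mem_varF E).1 hx) he).1.symm

end MTLLLProof
namespace MTLLLProof
open MTLLL

variable {V : Type*} [Fintype V] (E : V → V → Prop) {b : ℕ} (R : LocalRule E b)
  (I : Set V → Set V)

/-- the vertex set of the run landscape -/
def vertsSet (k : ℕ) (rnd : V × ℕ → Fin b) : Set (V × ℕ) :=
  {a : V × ℕ | a.2 < k ∧ a.1 ∈ I (bad E R (MT E R (id : V → V) I rnd a.2))}

lemma cnt_eq_cS {k : ℕ} {rnd : V × ℕ → Fin b} {S : Finset (V × ℕ)}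
    (hS : vertsSet E R I k rnd = ↑S) {i : ℕ} (hik : i ≤ k) (x : V) :
    cnt E R I rnd i x = cS E S i x := by
  unfold cnt cS
  congr 1
  apply Finset.filter_congr
  intro j hj
  rw [Finset.mem_range] at hj
  have hjk : j < k := lt_of_lt_of_le hj hik
  simp only [res, VarSet, Set.mem_iUnion, eq_iff_iff]
  constructor
  · rintro ⟨y, hy, hxy⟩
    refine ⟨y, ?_, hxy⟩
    have : (y, j) ∈ vertsSet E R I k rnd := ⟨hjk, hy⟩
    rwa [hS] at this
  · rintro ⟨y, hy, hxy⟩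
    have : (y, j) ∈ vertsSet E R I k rnd := by rw [hS]; exact hy
    exact ⟨y, this.2, hxy⟩

lemma measure_vertsSet_le (hb : 0 < b) {μ : MeasureTheory.Measure ((V × ℕ) → Fin b)}
    (hμ : IsUnifProduct b μ) (hI : IndepFun (Rel E) I) (k : ℕ) {S : Finset (V × ℕ)}
    (hind : ∀ a ∈ S, ∀ a' ∈ S, a.2 = a'.2 → a ≠ a' → ¬ Rel E a.1 a'.1) :
    μ {rnd | vertsSet E R I k rnd = ↑S}
      ≤ ∏ a ∈ S, ((Nat.card (R.Rc a.1) : ℝ≥0∞) * (1 / (b : ℝ≥0∞)) ^ (Var E a.1).ncard) := by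
  classical
  haveI : ∀ y : V, Fintype (Var E y) := fun y => Set.Finite.fintype (Set.toFinite _)
  -- the cylinder events indexed by potential violation data
  set A : (∀ a : {a // a ∈ S}, Var E a.1.1 → Fin b) → Set ((V × ℕ) → Fin b) :=
    fun v => {rnd | ∀ (a : {a // a ∈ S}) (x : Var E a.1.1),
      rnd (coord E S a.1 x.1) = v a x} with hA
  set VioF : Finset (∀ a : {a // a ∈ S}, Var E a.1.1 → Fin b) :=
    Finset.univ.filter (fun v => ∀ a : {a // a ∈ S}, v a ∈ R.Rc a.1.1) with hVioF
  -- step 2 : the event is covered by the cylinders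
  have hcover : {rnd | vertsSet E R I k rnd = ↑S} ⊆ ⋃ v ∈ VioF, A v := by
    intro rnd hr
    simp only [Set.mem_setOf_eq] at hr
    set v₀ : ∀ a : {a // a ∈ S}, Var E a.1.1 → Fin b :=
      fun a x => rnd (coord E S a.1 x.1) with hv₀
    have hmem : v₀ ∈ VioF := by
      rw [hVioF, Finset.mem_filter]
      refine ⟨Finset.mem_univ _, ?_⟩
      intro a
      obtain ⟨⟨y, i⟩, haS⟩ := a
      have hverts : (y, i) ∈ vertsSet E R I k rnd := by rw [hr]; exact haS
      obtain ⟨hik, hyI⟩ := hverts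
      have hbad : y ∈ bad E R (MT E R (id : V → V) I rnd i) := (hI _).1 hyI
      have : v₀ ⟨(y, i), haS⟩ = fun x : Var E y => MT E R (id : V → V) I rnd i x.1 := by
        funext x
        rw [hv₀]
        show rnd (coord E S (y, i) x.1) = _
        rw [mt_eq, coord, cnt_eq_cS E R I hr hik.le]
      rw [this]
      exact hbad
    exact Set.mem_biUnion hmem (fun a x => rfl)
  -- step 1 : each cylinder has small measure
  have hcyl : ∀ v, μ (A v) ≤ (1 / (b : ℝ≥0∞)) ^ (TS E S).card := by
    intro v
    set g : V × ℕ → Fin b := fun p =>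
      if h : ∃ a : {a // a ∈ S}, ∃ x : Var E a.1.1, coord E S a.1 x.1 = p then
        v h.choose h.choose_spec.choose
      else ⟨0, hb⟩ with hg
    have hsub : A v ⊆ {rnd | ∀ p ∈ TS E S, rnd p = g p} := by
      intro rnd hr p hp
      rw [mem_TS] at hp
      obtain ⟨a, haS, x, hx, he⟩ := hp
      have hex : ∃ a : {a // a ∈ S}, ∃ x : Var E a.1.1, coord E S a.1 x.1 = p :=
        ⟨⟨a, haS⟩, ⟨x, hx⟩, he⟩
      rw [hg]
      simp only [dif_pos hex]
      have hthis := hr hex.choose hex.choose_spec.choose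
      rw [hex.choose_spec.choose_spec] at hthis
      exact hthis
    calc μ (A v) ≤ μ {rnd | ∀ p ∈ TS E S, rnd p = g p} := measure_mono hsub
    _ = (1 / (b : ℝ≥0∞)) ^ (TS E S).card := hμ.2 (TS E S) g
  -- step 4 : counting violation data
  have hcount : (VioF.card : ℝ≥0∞) ≤ ∏ a ∈ S, (Nat.card (R.Rc a.1) : ℝ≥0∞) := by
    have h1 : VioF.card = Nat.card {v : ∀ a : {a // a ∈ S}, Var E a.1.1 → Fin b //
        ∀ a : {a // a ∈ S}, v a ∈ R.Rc a.1.1} := by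
      rw [Nat.card_eq_fintype_card, hVioF]
      exact (Fintype.card_subtype _).symm
    have h2 : Nat.card {v : ∀ a : {a // a ∈ S}, Var E a.1.1 → Fin b //
        ∀ a : {a // a ∈ S}, v a ∈ R.Rc a.1.1}
        = Nat.card (∀ a : {a // a ∈ S}, (R.Rc a.1.1 : Set _)) :=
      Nat.card_congr (Equiv.subtypePiEquivPi)
    have h3 : Nat.card (∀ a : {a // a ∈ S}, (R.Rc a.1.1 : Set _))
        = ∏ a : {a // a ∈ S}, Nat.card (R.Rc a.1.1) := Nat.card_pi
    rw [h1, h2, h3]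
    rw [← Finset.prod_coe_sort S (fun a => (Nat.card (R.Rc a.1) : ℝ≥0∞))]
    rw [Nat.cast_prod]
  -- put everything together
  calc μ {rnd | vertsSet E R I k rnd = ↑S} ≤ μ (⋃ v ∈ VioF, A v) := measure_mono hcover
  _ ≤ ∑ v ∈ VioF, μ (A v) := measure_biUnion_finset_le _ _
  _ ≤ ∑ _v ∈ VioF, (1 / (b : ℝ≥0∞)) ^ (TS E S).card := Finset.sum_le_sum fun v _ => hcyl v
  _ = (VioF.card : ℝ≥0∞) * (1 / (b : ℝ≥0∞)) ^ (TS E S).card := by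
      rw [Finset.sum_const, nsmul_eq_mul]
  _ ≤ (∏ a ∈ S, (Nat.card (R.Rc a.1) : ℝ≥0∞)) * (1 / (b : ℝ≥0∞)) ^ (TS E S).card := by
      exact mul_le_mul_left hcount _
  _ = ∏ a ∈ S, ((Nat.card (R.Rc a.1) : ℝ≥0∞) * (1 / (b : ℝ≥0∞)) ^ (Var E a.1).ncard) := by
      rw [card_TS E hind, ← Finset.prod_pow_eq_pow_sum, ← Finset.prod_mul_distrib]

end MTLLLProof
namespace MTLLLProof
open MTLLL

section order

lemma card_filter_rel_lt {α : Type*} {r : α → α → Prop} (htr : Transitive r)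
    (hirr : ∀ x, ¬ r x x) {s : Finset α} {a a' : α} (ha : a ∈ s) (h : r a a') :
    (s.filter (fun b => r b a)).card < (s.filter (fun b => r b a')).card := by
  classical
  apply Finset.card_lt_card
  constructor
  · intro c hc
    rw [Finset.mem_filter] at hc ⊢
    exact ⟨hc.1, htr hc.2 h⟩
  · intro hsub
    have : a ∈ s.filter (fun b => r b a) := hsub (by simp [Finset.mem_filter, ha, h])
    simp only [Finset.mem_filter] at this
    exact hirr a this.2

end order

variable {V : Type*} [Fintype V] [Nonempty V] [LinearOrder V] (E : V → V → Prop)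

/-- lexicographic order on level, then vertex -/
def lexLT (a a' : V × ℕ) : Prop := a.2 < a'.2 ∨ (a.2 = a'.2 ∧ a.1 < a'.1)

lemma lexLT_trans : Transitive (lexLT (V := V)) := by
  rintro a b c (h | ⟨h1, h2⟩) (h' | ⟨h1', h2'⟩)
  · exact Or.inl (h.trans h')
  · exact Or.inl (by omega)
  · exact Or.inl (by omega)
  · exact Or.inr ⟨h1.trans h1', h2.trans h2'⟩

lemma lexLT_irrefl : ∀ a : V × ℕ, ¬ lexLT a a := by
  rintro a (h | ⟨h1, h2⟩)
  · exact absurd h (lt_irrefl _)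
  · exact absurd h2 (lt_irrefl _)

lemma lexLT_total {a a' : V × ℕ} (h : a ≠ a') : lexLT a a' ∨ lexLT a' a := by
  rcases lt_trichotomy a.2 a'.2 with h2 | h2 | h2
  · exact Or.inl (Or.inl h2)
  · rcases lt_trichotomy a.1 a'.1 with h1 | h1 | h1
    · exact Or.inl (Or.inr ⟨h2, h1⟩)
    · exact absurd (Prod.ext h1 h2) h
    · exact Or.inr (Or.inr ⟨h2.symm, h1⟩)
  · exact Or.inr (Or.inl h2)

/-- position of `a` in the lexicographic enumeration of `S` -/
noncomputable def idx (S : Finset (V × ℕ)) (a : V × ℕ) : ℕ :=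
  (S.filter (fun a' => lexLT a' a)).card

lemma idx_injOn {S : Finset (V × ℕ)} {a a' : V × ℕ} (ha : a ∈ S) (ha' : a' ∈ S)
    (h : idx S a = idx S a') : a = a' := by
  by_contra hne
  rcases lexLT_total hne with hlt | hlt
  · exact absurd h (Nat.ne_of_lt (card_filter_rel_lt lexLT_trans lexLT_irrefl ha hlt))
  · exact absurd h.symm (Nat.ne_of_lt (card_filter_rel_lt lexLT_trans lexLT_irrefl ha' hlt))

lemma idx_lt_card {S : Finset (V × ℕ)} {a : V × ℕ} (ha : a ∈ S) : idx S a < S.card := by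
  apply Finset.card_lt_card
  constructor
  · exact Finset.filter_subset _ _
  · intro hsub
    have := hsub ha
    simp only [Finset.mem_filter] at this
    exact lexLT_irrefl a this.2

lemma idx_congr {S S' : Finset (V × ℕ)} {i : ℕ}
    (hcols : ∀ c : V × ℕ, c.2 ≤ i → (c ∈ S ↔ c ∈ S')) {a : V × ℕ} (hai : a.2 ≤ i) :
    idx S a = idx S' a := by
  unfold idx
  congr 1
  ext c
  simp only [Finset.mem_filter]
  constructor
  · rintro ⟨hc, hlt⟩
    have hc2 : c.2 ≤ i := by rcases hlt with h | ⟨h, -⟩ <;> omega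
    exact ⟨(hcols c hc2).1 hc, hlt⟩
  · rintro ⟨hc, hlt⟩
    have hc2 : c.2 ≤ i := by rcases hlt with h | ⟨h, -⟩ <;> omega
    exact ⟨(hcols c hc2).2 hc, hlt⟩

/-- the Rel-neighbourhood of `z` as a finset -/
noncomputable def nbrF (z : V) : Finset V := Finset.univ.filter (fun y => Rel E z y)

/-- slot of `y` among the neighbours of `z` -/
noncomputable def ψ (z y : V) : ℕ := ((nbrF E z).filter (fun y' => y' < y)).card

lemma ψ_strictMono {z y y' : V} (hy : y ∈ nbrF E z) (h : y < y') :
    ψ E z y < ψ E z y' := by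
  unfold ψ
  apply Finset.card_lt_card
  constructor
  · intro c hc
    rw [Finset.mem_filter] at hc ⊢
    exact ⟨hc.1, hc.2.trans h⟩
  · intro hsub
    have : y ∈ (nbrF E z).filter (fun y'' => y'' < y) :=
      hsub (by rw [Finset.mem_filter]; exact ⟨hy, h⟩)
    rw [Finset.mem_filter] at this
    exact lt_irrefl _ this.2

lemma ψ_injOn {z y y' : V} (hy : y ∈ nbrF E z) (hy' : y' ∈ nbrF E z)
    (h : ψ E z y = ψ E z y') : y = y' := by
  by_contra hne
  rcases lt_or_gt_of_ne hne with hlt | hlt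
  · exact absurd h (Nat.ne_of_lt (ψ_strictMono E hy hlt))
  · exact absurd h.symm (Nat.ne_of_lt (ψ_strictMono E hy' hlt))

lemma ψ_lt_card {z y : V} (hy : y ∈ nbrF E z) : ψ E z y < (nbrF E z).card := by
  apply Finset.card_lt_card
  constructor
  · exact Finset.filter_subset _ _
  · intro hsub
    have := hsub hy
    simp only [Finset.mem_filter] at this
    exact lt_irrefl _ this.2

/-- groundedness of a vertex finset -/
def Grd (S : Finset (V × ℕ)) : Prop :=
  ∀ a ∈ S, ∀ i : ℕ, a.2 = i + 1 → ∃ z, (z, i) ∈ S ∧ Rel E z a.1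

/-- the chosen parent label of `a` in `S` -/
noncomputable def pz (S : Finset (V × ℕ)) (a : V × ℕ) : V :=
  if h : (Finset.univ.filter (fun z => (z, a.2 - 1) ∈ S ∧ Rel E z a.1)).Nonempty
  then (Finset.univ.filter (fun z => (z, a.2 - 1) ∈ S ∧ Rel E z a.1)).min' h
  else Classical.arbitrary V

lemma pz_spec {S : Finset (V × ℕ)} (hg : Grd E S) {a : V × ℕ} (ha : a ∈ S)
    (ha0 : a.2 ≠ 0) : (pz E S a, a.2 - 1) ∈ S ∧ Rel E (pz E S a) a.1 := by
  obtain ⟨z, hz, hrel⟩ := hg a ha (a.2 - 1) (by omega)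
  have hne : (Finset.univ.filter (fun z => (z, a.2 - 1) ∈ S ∧ Rel E z a.1)).Nonempty :=
    ⟨z, by simp [Finset.mem_filter, hz, hrel]⟩
  have hmem := Finset.min'_mem _ hne
  simp only [Finset.mem_filter] at hmem
  rw [pz, dif_pos hne]
  exact hmem.2

/-- level-0 labels -/
def S0 (S : Finset (V × ℕ)) : Finset V := (S.filter (fun a => a.2 = 0)).image Prod.fst

lemma mem_S0 {S : Finset (V × ℕ)} {y : V} : y ∈ S0 S ↔ (y, 0) ∈ S := by
  simp only [S0, Finset.mem_image, Finset.mem_filter]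
  constructor
  · rintro ⟨a, ⟨ha, h0⟩, rfl⟩
    rwa [show (a.1, 0) = a from Prod.ext rfl h0.symm]
  · intro h
    exact ⟨(y, 0), ⟨h, rfl⟩, rfl⟩

/-- the child code of a vertex finset -/
noncomputable def code (S : Finset (V × ℕ)) : Finset (ℕ × ℕ) :=
  (S.filter (fun a => a.2 ≠ 0)).image
    (fun a => (idx S (pz E S a, a.2 - 1), ψ E (pz E S a) a.1))

/-- reconstruction step: the code and levels `≤ i` determine level `i+1` -/
lemma recon {S S' : Finset (V × ℕ)} (hg : Grd E S) (hg' : Grd E S')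
    (hc : code E S = code E S') {i : ℕ}
    (hcols : ∀ c : V × ℕ, c.2 ≤ i → (c ∈ S ↔ c ∈ S')) {y : V}
    (hy : (y, i + 1) ∈ S) : (y, i + 1) ∈ S' := by
  set z := pz E S (y, i + 1) with hzdef
  obtain ⟨hzS, hrel⟩ := pz_spec E hg hy (by simp)
  simp only [show (y, i+1).2 - 1 = i from rfl] at hzS
  have hmemcode : (idx S (z, i), ψ E z y) ∈ code E S := by
    rw [code]
    apply Finset.mem_image_of_mem
    simp [Finset.mem_filter, hy]
  rw [hc, code] at hmemcode
  obtain ⟨a', ha', heq⟩ := Finset.mem_image.1 hmemcode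
  rw [Finset.mem_filter] at ha'
  obtain ⟨ha'S, ha'0⟩ := ha'
  obtain ⟨hwS', hwrel⟩ := pz_spec E hg' ha'S ha'0
  -- compare indices
  have hzS' : (z, i) ∈ S' := (hcols (z, i) le_rfl).1 hzS
  have hidx : idx S' (pz E S' a', a'.2 - 1) = idx S' (z, i) := by
    have h1 : idx S (z, i) = idx S' (z, i) := idx_congr hcols le_rfl
    have h2 := congrArg Prod.fst heq
    simp only at h2
    omega
  have hparents : (pz E S' a', a'.2 - 1) = (z, i) := idx_injOn hwS' hzS' hidx
  have hpz : pz E S' a' = z := congrArg Prod.fst hparents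
  have hlev : a'.2 = i + 1 := by
    have := congrArg Prod.snd hparents
    simp only at this
    omega
  have hslot : ψ E z a'.1 = ψ E z y := by
    have h2 := congrArg Prod.snd heq
    simp only at h2
    rwa [hpz] at h2
  have hy' : a'.1 = y := by
    apply ψ_injOn E _ _ hslot
    · rw [nbrF, Finset.mem_filter]
      exact ⟨Finset.mem_univ _, by rwa [hpz] at hwrel⟩
    · rw [nbrF, Finset.mem_filter]
      exact ⟨Finset.mem_univ _, hrel⟩
  have : (y, i + 1) = a' := by rw [← hy', ← hlev]
  rw [this]
  exact ha'S

/-- the encoding is injective on grounded finsets -/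
lemma enc_inj {S S' : Finset (V × ℕ)} (hg : Grd E S) (hg' : Grd E S')
    (h0 : S0 S = S0 S') (hc : code E S = code E S') : S = S' := by
  have key : ∀ i : ℕ, ∀ c : V × ℕ, c.2 ≤ i → (c ∈ S ↔ c ∈ S') := by
    intro i
    induction i with
    | zero =>
      intro c hc0
      have h00 : c.2 = 0 := Nat.le_zero.1 hc0
      have : c = (c.1, 0) := Prod.ext rfl h00
      rw [this, ← mem_S0, ← mem_S0, h0]
    | succ i ih =>
      intro c hc1
      rcases Nat.lt_or_ge c.2 (i + 1) with h | h
      · exact ih c (by omega)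
      · have hlev : c.2 = i + 1 := by omega
        have hcc : c = (c.1, i + 1) := Prod.ext rfl hlev
        rw [hcc]
        exact ⟨fun hcS => recon E hg hg' hc ih hcS,
          fun hcS => recon E hg' hg hc.symm (fun a hai => (ih a hai).symm) hcS⟩
  ext c
  exact key c.2 c le_rfl

/-- grounded finsets have levels below their cardinality -/
lemma level_lt_card {S : Finset (V × ℕ)} (hg : Grd E S) {a : V × ℕ} (ha : a ∈ S) :
    a.2 < S.card := by
  have claim : ∀ i : ℕ, (∃ y : V, (y, i) ∈ S) →
      i + 1 ≤ (S.filter (fun c => c.2 ≤ i)).card := by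
    intro i
    induction i with
    | zero =>
      rintro ⟨y, hy⟩
      rw [Nat.zero_add, Nat.one_le_iff_ne_zero, ← Nat.pos_iff_ne_zero, Finset.card_pos]
      exact ⟨(y, 0), by simp [Finset.mem_filter, hy]⟩
    | succ i ih =>
      rintro ⟨y, hy⟩
      obtain ⟨z, hz, -⟩ := hg (y, i + 1) hy i rfl
      have h1 : i + 1 ≤ (S.filter (fun c => c.2 ≤ i)).card := ih ⟨z, hz⟩
      have h2 : (S.filter (fun c => c.2 ≤ i)).card < (S.filter (fun c => c.2 ≤ i + 1)).card := by
        apply Finset.card_lt_card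
        constructor
        · intro c hc
          rw [Finset.mem_filter] at hc ⊢
          exact ⟨hc.1, by omega⟩
        · intro hsub
          have := hsub (by simp [Finset.mem_filter, hy] : (y, i+1) ∈ S.filter (fun c => c.2 ≤ i+1))
          simp [Finset.mem_filter] at this
      exact Nat.succ_le_of_lt (lt_of_le_of_lt h1 h2)
  have h := claim a.2 ⟨a.1, by rwa [Prod.mk.eta]⟩
  calc a.2 < a.2 + 1 := Nat.lt_succ_self _
  _ ≤ (S.filter (fun c => c.2 ≤ a.2)).card := h
  _ ≤ S.card := Finset.card_le_card (Finset.filter_subset _ _)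

/-- the finset of admissible vertex sets -/
noncomputable def AF (m : ℕ) : Finset (Finset (V × ℕ)) :=
  ((Finset.univ ×ˢ Finset.range m).powerset).filter (Adm E m)

lemma mem_AF_of_adm {m : ℕ} {S : Finset (V × ℕ)} (h : Adm E m S) : S ∈ AF E m := by
  rw [AF, Finset.mem_filter, Finset.mem_powerset]
  refine ⟨fun a ha => ?_, h⟩
  rw [Finset.mem_product, Finset.mem_range]
  refine ⟨Finset.mem_univ _, ?_⟩
  have h1 := level_lt_card E (fun a ha i hi => h.2.2.1 a ha i hi) ha
  have h2 := h.1
  omega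

lemma card_AF_le {Δ : ℕ} (hΔ : ∀ z : V, (nbrF E z).card ≤ Δ) (m : ℕ) :
    (AF E m).card ≤ 2 ^ (Fintype.card V) * ∑ r ∈ Finset.range (m + 1), (m * Δ).choose r := by
  classical
  set X : Finset (ℕ × ℕ) := Finset.range m ×ˢ Finset.range Δ with hX
  set TGT : Finset (Finset V × Finset (ℕ × ℕ)) :=
    (Finset.univ : Finset V).powerset ×ˢ (X.powerset.filter (fun c => c.card ≤ m)) with hTGT
  have hmaps : ∀ S ∈ AF E m, (S0 S, code E S) ∈ TGT := by
    intro S hS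
    rw [AF, Finset.mem_filter] at hS
    obtain ⟨-, hcard, hind, hgrd, -⟩ := hS
    have hg : Grd E S := fun a ha i hi => hgrd a ha i hi
    rw [hTGT, Finset.mem_product]
    constructor
    · simp [Finset.mem_powerset]
    · rw [Finset.mem_filter, Finset.mem_powerset]
      constructor
      · intro c hc
        rw [code, Finset.mem_image] at hc
        obtain ⟨a, ha, rfl⟩ := hc
        rw [Finset.mem_filter] at ha
        obtain ⟨haS, ha0⟩ := ha
        obtain ⟨hpS, hprel⟩ := pz_spec E hg haS ha0
        rw [hX, Finset.mem_product, Finset.mem_range, Finset.mem_range]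
        constructor
        · have := idx_lt_card hpS
          omega
        · have h1 : a.1 ∈ nbrF E (pz E S a) := by
            rw [nbrF, Finset.mem_filter]
            exact ⟨Finset.mem_univ _, hprel⟩
          exact lt_of_lt_of_le (ψ_lt_card E h1) (hΔ _)
      · calc (code E S).card ≤ (S.filter (fun a => a.2 ≠ 0)).card := Finset.card_image_le
        _ ≤ S.card := Finset.card_le_card (Finset.filter_subset _ _)
        _ = m := hcard
  have hinj : Set.InjOn (fun S => (S0 S, code E S)) ↑(AF E m) := by
    intro S hS S' hS' heq
    simp only [Finset.coe_filter, Set.mem_setOf_eq, AF, Finset.mem_coe, Finset.mem_filter] at hS hS'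
    have hg : Grd E S := fun a ha i hi => hS.2.2.2.1 a ha i hi
    have hg' : Grd E S' := fun a ha i hi => hS'.2.2.2.1 a ha i hi
    exact enc_inj E hg hg' (congrArg Prod.fst heq) (congrArg Prod.snd heq)
  have hle : (AF E m).card ≤ TGT.card := Finset.card_le_card_of_injOn _ hmaps hinj
  refine hle.trans ?_
  rw [hTGT, Finset.card_product, Finset.card_powerset, Finset.card_univ]
  apply Nat.mul_le_mul_left
  have hsub : X.powerset.filter (fun c => c.card ≤ m) ⊆
      (Finset.range (m + 1)).biUnion (fun r => Finset.powersetCard r X) := by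
    intro c hc
    rw [Finset.mem_filter, Finset.mem_powerset] at hc
    rw [Finset.mem_biUnion]
    exact ⟨c.card, by rw [Finset.mem_range]; omega, by
      rw [Finset.mem_powersetCard]; exact ⟨hc.1, rfl⟩⟩
  calc (X.powerset.filter (fun c => c.card ≤ m)).card
      ≤ ((Finset.range (m + 1)).biUnion (fun r => Finset.powersetCard r X)).card :=
        Finset.card_le_card hsub
  _ ≤ ∑ r ∈ Finset.range (m + 1), (Finset.powersetCard r X).card := Finset.card_biUnion_le
  _ = ∑ r ∈ Finset.range (m + 1), (m * Δ).choose r := by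
      refine Finset.sum_congr rfl fun r _ => ?_
      rw [Finset.card_powersetCard, hX, Finset.card_product, Finset.card_range,
        Finset.card_range]

end MTLLLProof
namespace MTLLLProof
open MTLLL

variable {V : Type*} [Fintype V] [Nonempty V] [LinearOrder V] (E : V → V → Prop)
  {b : ℕ} (R : LocalRule E b) (I : Set V → Set V)

lemma event_subset_union (hI : IndepFun (Rel E) I) (k m : ℕ) :
    {rnd : V × ℕ → Fin b | (vertsSet E R I k rnd).ncard = m} ⊆
      ⋃ S ∈ AF E m, {rnd : V × ℕ → Fin b | vertsSet E R I k rnd = ↑S} := by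
  intro rnd hr
  simp only [Set.mem_setOf_eq] at hr
  have hfin : (vertsSet E R I k rnd).Finite := by
    apply Set.Finite.subset ((Set.finite_univ (α := V)).prod (Set.finite_Iio k))
    intro a ha
    exact ⟨Set.mem_univ _, ha.1⟩
  set S := hfin.toFinset with hSdef
  have hScoe : vertsSet E R I k rnd = ↑S := hfin.coe_toFinset.symm
  have hmemS : ∀ a : V × ℕ, a ∈ S ↔ (a.2 < k ∧ a.1 ∈ I (bad E R (MT E R (id : V → V) I rnd a.2))) := by
    intro a
    rw [hSdef, Set.Finite.mem_toFinset]
    rfl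
  have hcard : S.card = m := by
    rw [← hr, Set.ncard_eq_toFinset_card _ hfin]
  have hAdm : Adm E m S := by
    refine ⟨hcard, ?_, ?_, ?_⟩
    · intro a ha a' ha' hlev hne
      rw [hmemS] at ha ha'
      have h1 := ha.2
      have h2 := ha'.2
      rw [← hlev] at h2
      have hfst : a.1 ≠ a'.1 := by
        intro hx
        exact hne (Prod.ext hx hlev)
      exact (hI (bad E R (MT E R (id : V → V) I rnd a.2))).2.1 a.1 h1 a'.1 h2 hfst
    · intro a ha i hi
      rw [hmemS] at ha
      obtain ⟨hak, haI⟩ := ha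
      rw [hi] at haI
      obtain ⟨z, hz, hvar⟩ := grounded_step E R I rnd hI haI
      refine ⟨z, ?_, hvar⟩
      rw [hmemS]
      exact ⟨by omega, hz⟩
    · intro a ha
      rw [hmemS] at ha
      exact var_nonempty_of_bad E R ((hI _).1 ha.2)
  exact Set.mem_biUnion (mem_AF_of_adm E hAdm) hScoe

lemma measure_event_le (hb : 0 < b) {μ : MeasureTheory.Measure ((V × ℕ) → Fin b)}
    (hμ : IsUnifProduct b μ) (hI : IndepFun (Rel E) I) (k m : ℕ) {p : ℝ} (hp : 0 ≤ p)
    (hmain' : ∀ x : V, (Nat.card (R.Rc x) : ℝ) * (1 / (b : ℝ)) ^ (Var E x).ncard ≤ p) :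
    μ {rnd | (vertsSet E R I k rnd).ncard = m}
      ≤ ENNReal.ofReal (((AF E m).card : ℝ) * p ^ m) := by
  have hfac : ∀ x : V,
      (Nat.card (R.Rc x) : ℝ≥0∞) * (1 / (b : ℝ≥0∞)) ^ (Var E x).ncard
        ≤ ENNReal.ofReal p := by
    intro x
    have h1 : (1 / (b : ℝ≥0∞)) = ENNReal.ofReal (1 / (b : ℝ)) := by
      rw [one_div, one_div, ENNReal.ofReal_inv_of_pos (by exact_mod_cast hb),
        ENNReal.ofReal_natCast]
    rw [h1, ← ENNReal.ofReal_pow (by positivity), ← ENNReal.ofReal_natCast (Nat.card (R.Rc x)),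
      ← ENNReal.ofReal_mul (by positivity)]
    exact ENNReal.ofReal_le_ofReal (hmain' x)
  calc μ {rnd | (vertsSet E R I k rnd).ncard = m}
      ≤ μ (⋃ S ∈ AF E m, {rnd : V × ℕ → Fin b | vertsSet E R I k rnd = ↑S}) :=
        measure_mono (event_subset_union E R I hI k m)
  _ ≤ ∑ S ∈ AF E m, μ {rnd : V × ℕ → Fin b | vertsSet E R I k rnd = ↑S} :=
        measure_biUnion_finset_le _ _
  _ ≤ ∑ _S ∈ AF E m, ENNReal.ofReal (p ^ m) := by
      apply Finset.sum_le_sum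
      intro S hS
      rw [AF, Finset.mem_filter] at hS
      obtain ⟨-, hcard, hind, -, -⟩ := hS
      calc μ {rnd : V × ℕ → Fin b | vertsSet E R I k rnd = ↑S}
          ≤ ∏ a ∈ S, ((Nat.card (R.Rc a.1) : ℝ≥0∞) * (1 / (b : ℝ≥0∞)) ^ (Var E a.1).ncard) :=
            measure_vertsSet_le E R I hb hμ hI k hind
      _ ≤ ∏ _a ∈ S, ENNReal.ofReal p := Finset.prod_le_prod' (fun a _ => hfac a.1)
      _ = ENNReal.ofReal (p ^ m) := by
          rw [Finset.prod_const, hcard, ENNReal.ofReal_pow hp]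
  _ = ((AF E m).card : ℝ≥0∞) * ENNReal.ofReal (p ^ m) := by
      rw [Finset.sum_const, nsmul_eq_mul]
  _ = ENNReal.ofReal (((AF E m).card : ℝ) * p ^ m) := by
      rw [ENNReal.ofReal_mul (by positivity), ENNReal.ofReal_natCast]

end MTLLLProof
open MTLLL in
/-- Theorem 3.7 (analysis of the classical Moser–Tardos algorithm): for a finite digraph
with the singleton partition (encoded here by `part = id`), under the condition
`max_x |𝐑ᶜ(x)|/b^{|Var(x)|} ≤ (eΔ)^{-(1+δ)}`, the probability that the run landscape after
`k` steps has exactly `m` vertices is at most `d·|V|·(m+1)^{|V|}/(eΔ)^{δm}`. -/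
theorem classical_mt_landscape_bound
    {V : Type*} [Nonempty V] [Fintype V] (E : V → V → Prop)
    (b : ℕ) (hb : 1 < b) (R : LocalRule E b)
    (Δ : ℕ) (hΔ : maxdeg (Rel E) = (Δ : ℕ∞)) (hΔ1 : 1 ≤ Δ)
    (d : ℕ) (hd : IsGreatest {j : ℕ | ∃ x : V, j = (Var E x).ncard} d)
    (δ : ℝ) (hδ : 0 < δ)
    (hmain : ∀ x : V, (Nat.card (R.Rc x) : ℝ) / (b : ℝ) ^ (Var E x).ncard
      ≤ 1 / (Real.exp 1 * Δ) ^ ((1 : ℝ) + δ))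
    (I : Set V → Set V) (hI : IndepFun (Rel E) I) (lo : LinearOrder V)
    (μ : MeasureTheory.Measure ((V × ℕ) → Fin b)) (hμ : IsUnifProduct b μ)
    (m k : ℕ) :
    μ {rnd | ((runLandscape E R (id : V → V) hI rnd lo k).F.verts.ncard) = m}
      ≤ ENNReal.ofReal ((d : ℝ) * (Nat.card V : ℝ) * (m + 1 : ℝ) ^ (Nat.card V)
          / (Real.exp 1 * Δ) ^ (δ * (m : ℝ))) := by
  classical
  letI := lo
  open MTLLLProof in
  have hb0 : 0 < b := by omega
  have hn1 : 0 < Nat.card V := Nat.card_pos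
  -- bound on neighbourhood finsets
  have hnbr : ∀ z : V, (nbrF E z).card ≤ Δ := by
    intro z
    have hset : Nbr (Rel E) z = ↑(nbrF E z) := by
      ext y
      simp only [Nbr, MTLLL.Var, Cl, Set.mem_union, Set.mem_setOf_eq, nbrF,
        Finset.coe_filter, Finset.mem_univ, true_and, Set.mem_setOf_eq]
      constructor
      · rintro (h | h)
        · exact h
        · obtain ⟨w, hw1, hw2⟩ := h
          exact ⟨w, hw2, hw1⟩
      · exact fun h => Or.inl h
    have hle : (Nbr (Rel E) z).encard ≤ maxdeg (Rel E) :=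
      le_iSup (fun x => (Nbr (Rel E) x).encard) z
    rw [hΔ, hset, Set.encard_coe_eq_coe_finsetCard] at hle
    exact_mod_cast hle
  -- d is at least 1
  have hd1 : 1 ≤ d := by
    have hex : ∃ x : V, (Var E x).Nonempty := by
      by_contra hno
      push_neg at hno
      have hzero : maxdeg (Rel E) = 0 := by
        rw [maxdeg]
        refine le_antisymm ?_ zero_le
        apply iSup_le
        intro x
        have hemp : Nbr (Rel E) x = ∅ := by
          rw [Set.eq_empty_iff_forall_notMem]
          intro y hy
          rcases hy with h | h
          · obtain ⟨w, hw1, hw2⟩ := h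
            rw [hno x] at hw1
            exact hw1
          · obtain ⟨w, hw1, hw2⟩ := h
            rw [hno y] at hw1
            exact hw1
        rw [hemp, Set.encard_empty]
      rw [hΔ] at hzero
      have : Δ = 0 := by exact_mod_cast hzero
      omega
    obtain ⟨x, hxne⟩ := hex
    have h1 : 1 ≤ (Var E x).ncard := (Set.ncard_pos (Set.toFinite _)).2 hxne
    have h2 : (Var E x).ncard ≤ d := hd.2 ⟨x, rfl⟩
    omega
  -- constants
  have he1pos : (0:ℝ) < Real.exp 1 := Real.exp_pos 1
  have he1ge : (1:ℝ) ≤ Real.exp 1 := Real.one_le_exp (by norm_num)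
  have hΔR : (1:ℝ) ≤ (Δ:ℝ) := by exact_mod_cast hΔ1
  have hcpos : (0:ℝ) < Real.exp 1 * Δ := mul_pos he1pos (by linarith)
  set c : ℝ := Real.exp 1 * Δ with hc
  set p : ℝ := 1 / c ^ ((1:ℝ) + δ) with hpdef
  have hppos : 0 ≤ p := by positivity
  have hmain' : ∀ x : V,
      (Nat.card (R.Rc x) : ℝ) * (1 / (b:ℝ)) ^ (Var E x).ncard ≤ p := by
    intro x
    have hyp := hmain x
    calc (Nat.card (R.Rc x) : ℝ) * (1 / (b:ℝ)) ^ (Var E x).ncard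
        = (Nat.card (R.Rc x) : ℝ) / (b:ℝ) ^ (Var E x).ncard := by
          rw [div_pow, one_pow, div_eq_mul_inv, div_eq_mul_inv, one_mul]
    _ ≤ p := hyp
  have hev : {rnd : (V × ℕ) → Fin b |
        ((runLandscape E R (id : V → V) hI rnd lo k).F.verts.ncard) = m}
      = {rnd : (V × ℕ) → Fin b | (vertsSet E R I k rnd).ncard = m} := rfl
  rw [hev]
  rcases Nat.eq_zero_or_pos m with rfl | hm
  · -- the case m = 0
    haveI := hμ.1
    refine MeasureTheory.prob_le_one.trans ?_
    rw [← ENNReal.ofReal_one]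
    apply ENNReal.ofReal_le_ofReal
    have hone : c ^ (δ * ((0:ℕ):ℝ)) = 1 := by
      norm_num
    rw [hone]
    have hdr : (1:ℝ) ≤ (d:ℝ) := by exact_mod_cast hd1
    have hnr : (1:ℝ) ≤ (Nat.card V : ℝ) := by exact_mod_cast hn1
    have hpow : (((0:ℕ):ℝ) + 1) ^ (Nat.card V) = 1 := by norm_num
    rw [hpow]
    rw [div_one, mul_one]
    nlinarith
  · -- the case m ≥ 1
    have hμle := measure_event_le E R I hb0 hμ hI k m hppos hmain'
    refine hμle.trans ?_
    apply ENNReal.ofReal_le_ofReal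
    set n := Nat.card V with hn
    have hnn : Fintype.card V = n := Nat.card_eq_fintype_card.symm
    set SC : ℝ := ∑ r ∈ Finset.range (m+1), ((m*Δ).choose r : ℝ) with hSC
    have hAFle : ((AF E m).card : ℝ) ≤ 2^n * SC := by
      have hcast := card_AF_le E hnbr m
      calc ((AF E m).card : ℝ)
          ≤ ((2 ^ (Fintype.card V) * ∑ r ∈ Finset.range (m+1), (m*Δ).choose r : ℕ) : ℝ) := by
            exact_mod_cast hcast
      _ = 2^n * SC := by
          rw [hSC, hnn]
          push_cast
          ring
    have hSCle : SC ≤ (Δ:ℝ)^m * Real.exp 1 ^ m := by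
      calc SC ≤ ∑ r ∈ Finset.range (m+1), (Δ:ℝ)^m * ((m:ℝ)^r / (Nat.factorial r : ℝ)) := by
            apply Finset.sum_le_sum
            intro r hr
            rw [Finset.mem_range] at hr
            calc ((m*Δ).choose r : ℝ) ≤ (((m*Δ) : ℕ):ℝ)^r / (Nat.factorial r : ℝ) :=
                  Nat.choose_le_pow_div r (m*Δ)
            _ = (m:ℝ)^r * (Δ:ℝ)^r / (Nat.factorial r : ℝ) := by push_cast; ring
            _ ≤ (m:ℝ)^r * (Δ:ℝ)^m / (Nat.factorial r : ℝ) := by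
                have hrm : r ≤ m := by omega
                gcongr
            _ = (Δ:ℝ)^m * ((m:ℝ)^r / (Nat.factorial r : ℝ)) := by ring
      _ = (Δ:ℝ)^m * ∑ r ∈ Finset.range (m+1), ((m:ℝ)^r / (Nat.factorial r : ℝ)) := by
            rw [Finset.mul_sum]
      _ ≤ (Δ:ℝ)^m * Real.exp m := by
            gcongr
            exact Real.sum_le_exp_of_nonneg (by positivity) (m+1)
      _ = (Δ:ℝ)^m * Real.exp 1 ^ m := by rw [Real.exp_one_pow]
    have hkey : (Δ:ℝ)^m * Real.exp 1 ^ m * p^m = 1 / c ^ (δ * (m:ℝ)) := by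
      have h1 : (Δ:ℝ)^m * Real.exp 1 ^ m = c ^ ((m:ℕ):ℝ) := by
        rw [Real.rpow_natCast, hc, mul_pow]
        ring
      have hp2 : p = c ^ (-((1:ℝ)+δ)) := by
        rw [hpdef, Real.rpow_neg hcpos.le, one_div]
      have h2 : p ^ m = c ^ (-((1:ℝ)+δ) * m) := by
        rw [hp2, ← Real.rpow_natCast (c ^ (-((1:ℝ)+δ))) m, ← Real.rpow_mul hcpos.le]
      rw [h1, h2, ← Real.rpow_add hcpos, one_div, ← Real.rpow_neg hcpos.le]
      congr 1
      push_cast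
      ring
    have h2n : (2:ℝ)^n ≤ ((m:ℝ)+1)^n := by
      apply pow_le_pow_left₀ (by norm_num)
      have : (1:ℝ) ≤ (m:ℝ) := by exact_mod_cast hm
      linarith
    have hdn : (1:ℝ) ≤ (d:ℝ) * (n:ℝ) := by
      have h1 : (1:ℝ) ≤ (d:ℝ) := by exact_mod_cast hd1
      have h2 : (1:ℝ) ≤ (n:ℝ) := by exact_mod_cast hn1
      nlinarith
    calc ((AF E m).card : ℝ) * p^m ≤ (2^n * SC) * p^m := by
          apply mul_le_mul_of_nonneg_right hAFle (by positivity)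
    _ ≤ (2^n * ((Δ:ℝ)^m * Real.exp 1 ^ m)) * p^m := by
          apply mul_le_mul_of_nonneg_right _ (by positivity)
          apply mul_le_mul_of_nonneg_left hSCle (by positivity)
    _ = 2^n * (1 / c ^ (δ * (m:ℝ))) := by rw [mul_assoc, hkey]
    _ ≤ ((d:ℝ) * (n:ℝ) * ((m:ℝ)+1)^n) * (1 / c ^ (δ * (m:ℝ))) := by
          apply mul_le_mul_of_nonneg_right _ (by positivity)
          calc (2:ℝ)^n ≤ ((m:ℝ)+1)^n := h2n
          _ = 1 * ((m:ℝ)+1)^n := (one_mul _).symm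
          _ ≤ ((d:ℝ) * (n:ℝ)) * ((m:ℝ)+1)^n := by
              apply mul_le_mul_of_nonneg_right hdn (by positivity)
    _ = (d:ℝ) * (n:ℝ) * ((m:ℝ)+1)^n / c ^ (δ * (m:ℝ)) := by rw [mul_one_div]
end

section
/- Let (G,𝐑,π) be a Moser–Tardos tuple, fix an independence function on Rel(G) and rnd ∈ b^{π×ℕ}. Then for every i ∈ ℕ and every x ∈ IB(MT^{i+1}) there exists y ∈ IB(MT^i) with Var(x) ∩ Var(y) ≠ ∅ (y = x is allowed). -/
open MeasureTheory
open scoped Classical ENNReal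

open MTLLL in
/-- Lemma 3.4: every clause resampled at step `i+1` shares a variable with a clause
resampled at step `i` (possibly itself). -/
theorem exists_prev_resampled_clause
    {V : Type*} [Nonempty V] {ι : Type*} [Finite ι]
    (E : V → V → Prop) (b : ℕ) (hb : 1 < b) (R : LocalRule E b) (part : V → ι)
    (I : Set V → Set V) (hI : IndepFun (Rel E) I) (rnd : ι × ℕ → Fin b)
    (i : ℕ) (x : V) (hx : x ∈ I (bad E R (MT E R part I rnd (i + 1)))) :
    ∃ y ∈ I (bad E R (MT E R part I rnd i)), (Var E x ∩ Var E y).Nonempty := by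

  have hxsub := (hI (bad E R (MT E R part I rnd (i+1)))).1 hx
  by_cases hvd : (Var E x ∩ VarSet E (I (bad E R (MT E R part I rnd i)))).Nonempty
  · obtain ⟨z, hz1, hz2⟩ := hvd
    simp only [VarSet, Set.mem_iUnion] at hz2
    obtain ⟨y, hy, hzy⟩ := hz2
    exact ⟨y, hy, ⟨z, hz1, hzy⟩⟩
  · have hagree : ∀ z ∈ Var E x, MT E R part I rnd (i+1) z = MT E R part I rnd i z := by
      intro z hz
      have hnz : z ∉ VarSet E (I (bad E R (MT E R part I rnd i))) :=
        fun h => hvd ⟨z, hz, h⟩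
      show (mtAux E R part I rnd (i+1)).1 z = (mtAux E R part I rnd i).1 z
      simp only [mtAux]
      exact if_neg hnz
    have hxbad : x ∈ bad E R (MT E R part I rnd i) := by
      have heq : (fun y : Var E x => MT E R part I rnd (i+1) y.1)
          = (fun y : Var E x => MT E R part I rnd i y.1) :=
        funext fun y => hagree y.1 y.2
      simp only [bad, Set.mem_setOf_eq] at hxsub ⊢
      rw [← heq]; exact hxsub
    have hVar : (Var E x).Nonempty := by
      by_contra h
      rw [Set.not_nonempty_iff_eq_empty] at h
      have hmem : (fun y : Var E x => MT E R part I rnd i y.1) ∈ R.Rc x := hxbad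
      simp [LocalRule.Rc, R.isFull_of_empty x h] at hmem
    by_cases hxI : x ∈ I (bad E R (MT E R part I rnd i))
    · exact ⟨x, hxI, hVar.imp fun z hz => ⟨hz, hz⟩⟩
    · obtain ⟨Isub, hInd, hmax⟩ := hI (bad E R (MT E R part I rnd i))
      set S := I (bad E R (MT E R part I rnd i)) with hS
      have hnotind : ¬ Indep (Rel E) (insert x S) := by
        intro hJ
        have := hmax _ (Set.subset_insert _ _) (Set.insert_subset hxbad Isub) hJ
        exact hxI (this ▸ Set.mem_insert x S)
      unfold Indep at hnotind
      push_neg at hnotind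
      obtain ⟨a, ha, c, hc, hac, hE⟩ := hnotind
      rcases ha with rfl | ha
      · rcases hc with rfl | hc
        · exact absurd rfl hac
        · exact ⟨c, hc, hE⟩
      · rcases hc with rfl | hc
        · obtain ⟨z, hz1, hz2⟩ := hE
          exact ⟨a, ha, ⟨z, hz2, hz1⟩⟩
        · exact absurd hE (hInd a ha c hc hac)
end

section
/- For every Δ ∈ ℕ₊ and every i ∈ ℕ₊, the number P_i of isomorphism classes of Δ-labelled trees with exactly i vertices satisfies P_i ≤ (eΔ)^i. -/
open MeasureTheory
open scoped Classical ENNReal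

namespace MTLLL

/-- A set of label sequences is prefix-closed. A `Δ`-labelled tree (a finite directed tree
with in-degrees `0` or `1` and out-edges carrying distinct labels from `{0,…,Δ-1}`) is
determined up to isomorphism by the prefix-closed set of label sequences read along the
paths from the root; thus isomorphism classes of `Δ`-labelled trees with `i` vertices
correspond exactly to finite prefix-closed sets `S ⊆ List (Fin Δ)` with `|S| = i`. -/
def PrefClosed {Δ : ℕ} (S : Set (List (Fin Δ))) : Prop :=
  ∀ l ∈ S, ∀ l' : List (Fin Δ), l' <+: l → l' ∈ S

/-- The type of isomorphism classes of `Δ`-labelled trees, encoded canonically as finite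
prefix-closed sets of label sequences. -/
def LabTree (Δ : ℕ) : Type :=
  {S : Set (List (Fin Δ)) // S.Finite ∧ PrefClosed S}

/-- The number of vertices of (the isomorphism class of) a `Δ`-labelled tree. -/
noncomputable def LabTree.size {Δ : ℕ} (T : LabTree Δ) : ℕ := T.1.ncard

end MTLLL
namespace MTcount

lemma list_lt_append_cons {α : Type*} [LinearOrder α] (p : List α) (a : α) (t : List α) :
    p < p ++ a :: t := by
  show List.Lex (· < ·) p (p ++ a :: t)
  induction p with
  | nil => exact List.Lex.nil
  | cons b p ih => exact List.Lex.cons ih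

lemma prefix_lt_of_ne {α : Type*} [LinearOrder α] {p l : List α} (h : p <+: l) (hne : p ≠ l) :
    p < l := by
  obtain ⟨r, rfl⟩ := h
  cases r with
  | nil => simp at hne
  | cons a t => exact list_lt_append_cons p a t

variable {Δ i : ℕ}

/-- The encoding of a prefix-closed finset of size `i` as a set of (parent index, label)
pairs. -/
noncomputable def enc (S : Finset (List (Fin Δ))) (h : S.card = i) : Finset (Fin i × Fin Δ) :=
  Finset.univ.filter (fun p => S.orderEmbOfFin h p.1 ++ [p.2] ∈ S)

lemma mem_enc {S : Finset (List (Fin Δ))} {h : S.card = i} {p : Fin i × Fin Δ} :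
    p ∈ enc S h ↔ S.orderEmbOfFin h p.1 ++ [p.2] ∈ S := by
  simp [enc]

lemma exists_emb_eq {S : Finset (List (Fin Δ))} (h : S.card = i) {l : List (Fin Δ)}
    (hl : l ∈ S) : ∃ k, S.orderEmbOfFin h k = l := by
  have h1 : l ∈ (S : Set (List (Fin Δ))) := hl
  rw [← Finset.range_orderEmbOfFin S h] at h1
  exact h1

lemma emb_zero {S : Finset (List (Fin Δ))} (h : S.card = i)
    (hpc : MTLLL.PrefClosed (S : Set (List (Fin Δ)))) (k : Fin i) (hk : (k : ℕ) = 0) :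
    S.orderEmbOfFin h k = [] := by
  have hnil : ([] : List (Fin Δ)) ∈ S := by
    have hpos : (0 : ℕ) < i := hk ▸ k.2
    obtain ⟨l, hl⟩ := Finset.card_pos.mp (h ▸ hpos)
    have : l ∈ (S : Set (List (Fin Δ))) := hl
    exact_mod_cast hpc l this [] (List.nil_prefix)
  obtain ⟨j, hj⟩ := exists_emb_eq h hnil
  have hkj : k ≤ j := by rw [Fin.le_def]; omega
  exact le_antisymm (hj ▸ (S.orderEmbOfFin h).monotone hkj)
    (by generalize S.orderEmbOfFin h k = x; rcases x with _ | ⟨a, t⟩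
        · exact le_rfl
        · exact le_of_lt List.Lex.nil)

lemma emb_mem {S : Finset (List (Fin Δ))} (h : S.card = i) (k : Fin i) :
    S.orderEmbOfFin h k ∈ S := Finset.orderEmbOfFin_mem S h k


lemma enc_injective {S S' : Finset (List (Fin Δ))} (h : S.card = i) (h' : S'.card = i)
    (hpc : MTLLL.PrefClosed (S : Set (List (Fin Δ))))
    (hpc' : MTLLL.PrefClosed (S' : Set (List (Fin Δ))))
    (he : enc S h = enc S' h') : S = S' := by
  set e := S.orderEmbOfFin h with hedef
  set e' := S'.orderEmbOfFin h' with hedef'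
  -- main claim: e = e'
  have main : ∀ n : ℕ, ∀ k : Fin i, (k : ℕ) ≤ n → e k = e' k := by
    intro n
    induction n with
    | zero =>
      intro k hk
      rw [emb_zero h hpc k (Nat.le_zero.mp hk), emb_zero h' hpc' k (Nat.le_zero.mp hk)]
    | succ n ihn =>
    intro k hk
    have ih : ∀ j : Fin i, j < k → e j = e' j := fun j hj =>
      ihn j (by have := Fin.lt_iff_val_lt_val.mp hj; omega)
    rcases Nat.eq_zero_or_pos (k : ℕ) with hk0 | hkpos
    · rw [emb_zero h hpc k hk0, emb_zero h' hpc' k hk0]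
    · -- one-sided inequality, proved symmetrically
      have side : ∀ (T T' : Finset (List (Fin Δ))) (hT : T.card = i) (hT' : T'.card = i),
          MTLLL.PrefClosed (T : Set (List (Fin Δ))) →
          MTLLL.PrefClosed (T' : Set (List (Fin Δ))) →
          enc T hT = enc T' hT' →
          (∀ j : Fin i, j < k → T.orderEmbOfFin hT j = T'.orderEmbOfFin hT' j) →
          T.orderEmbOfFin hT k ≤ T'.orderEmbOfFin hT' k := by
        intro T T' hT hT' hTpc hTpc' henc ihj
        set f := T.orderEmbOfFin hT
        set f' := T'.orderEmbOfFin hT'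
        -- f' k is nonempty
        have hne : f' k ≠ [] := by
          intro hnil
          have hz : (⟨0, lt_of_le_of_lt (Nat.zero_le _) k.2⟩ : Fin i) = k := by
            apply (f'.injective)
            rw [emb_zero hT' hTpc' _ rfl, hnil]
          have : (0 : ℕ) = (k : ℕ) := congrArg Fin.val hz
          omega
        -- decompose f' k = p ++ [a]
        obtain ⟨p, a, hpa⟩ : ∃ p a, f' k = p ++ [a] := by
          rcases List.eq_nil_or_concat (f' k) with hc | ⟨p, a, hc⟩
          · exact absurd hc hne
          · exact ⟨p, a, by simpa [List.concat_eq_append] using hc⟩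
        have hpS' : p ∈ T' := by
          have := hTpc' (f' k) (by exact_mod_cast emb_mem hT' k) p ⟨[a], hpa.symm⟩
          exact_mod_cast this
        obtain ⟨j, hj⟩ := exists_emb_eq hT' hpS'
        have hjk : j < k := by
          have : f' j < f' k := by
            rw [hj, hpa]
            exact list_lt_append_cons p a []
          exact (OrderEmbedding.lt_iff_lt _).mp this
        -- (j, a) ∈ enc T' = enc T
        have hmem' : (j, a) ∈ enc T' hT' := by
          rw [mem_enc]
          show f' j ++ [a] ∈ T'
          rw [hj, ← hpa]; exact emb_mem hT' k
        have hmem : (j, a) ∈ enc T hT := henc ▸ hmem'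
        rw [mem_enc] at hmem
        -- so f j ++ [a] ∈ T, equals f m for some m, with m ≥ k
        obtain ⟨m, hm⟩ := exists_emb_eq hT hmem
        have hval : f m = f' k := by
          rw [hm, ihj j hjk, hj, ← hpa]
        have hkm : k ≤ m := by
          by_contra hlt
          push_neg at hlt
          have := ihj m hlt
          have : f' m = f' k := by rw [← this, hval]
          have := f'.injective this
          omega
        calc f k ≤ f m := f.monotone hkm
          _ = f' k := hval
      have h1 := side S S' h h' hpc hpc' he (fun j hj => ih j hj)
      have h2 := side S' S h' h hpc' hpc he.symm (fun j hj => (ih j hj).symm)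
      exact le_antisymm h1 h2
  -- conclude S = S'
  apply Finset.coe_injective
  rw [← Finset.range_orderEmbOfFin S h, ← Finset.range_orderEmbOfFin S' h']
  have : ⇑e = ⇑e' := funext (fun k => main k k le_rfl)
  rw [hedef, hedef'] at this
  rw [this]

lemma enc_card {S : Finset (List (Fin Δ))} (h : S.card = i)
    (hpc : MTLLL.PrefClosed (S : Set (List (Fin Δ)))) (hi : 1 ≤ i) :
    (enc S h).card = i - 1 := by
  have hnil : ([] : List (Fin Δ)) ∈ S := by
    obtain ⟨l, hl⟩ := Finset.card_pos.mp (h ▸ hi)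
    have : l ∈ (S : Set (List (Fin Δ))) := hl
    exact_mod_cast hpc l this [] List.nil_prefix
  have hbij : (enc S h).card = (S.erase []).card := by
    apply Finset.card_bij (fun p _ => S.orderEmbOfFin h p.1 ++ [p.2])
    · intro p hp
      rw [mem_enc] at hp
      exact Finset.mem_erase.mpr ⟨by simp, hp⟩
    · intro p hp q hq heq
      obtain ⟨h1, h2⟩ := List.append_inj' heq rfl
      have hfst : p.1 = q.1 := (S.orderEmbOfFin h).injective h1
      have hsnd : p.2 = q.2 := by simpa using h2
      exact Prod.ext hfst hsnd
    · intro l hl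
      rw [Finset.mem_erase] at hl
      obtain ⟨hne, hlS⟩ := hl
      rcases List.eq_nil_or_concat l with hc | ⟨p, a, hc⟩
      · exact absurd hc hne
      · have hpa : l = p ++ [a] := by simpa [List.concat_eq_append] using hc
        have hpS : p ∈ S := by
          have : l ∈ (S : Set (List (Fin Δ))) := hlS
          exact_mod_cast hpc l this p ⟨[a], hpa.symm⟩
        obtain ⟨k, hk⟩ := exists_emb_eq h hpS
        refine ⟨(k, a), mem_enc.mpr ?_, ?_⟩
        · show S.orderEmbOfFin h k ++ [a] ∈ S
          rw [hk, ← hpa]; exact hlS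
        · show S.orderEmbOfFin h k ++ [a] = l
          rw [hk, ← hpa]
  rw [hbij, Finset.card_erase_of_mem hnil, h]

lemma choose_bound (Δ i : ℕ) (hΔ : 1 ≤ Δ) (hi : 1 ≤ i) :
    (((i * Δ).choose (i - 1) : ℕ) : ℝ) ≤ (Real.exp 1 * Δ) ^ i := by
  have hterm : ((i : ℝ)) ^ (i - 1) / ((i - 1).factorial : ℝ) ≤ Real.exp i := by
    refine le_trans ?_ (Real.sum_le_exp_of_nonneg (by positivity) i)
    refine Finset.single_le_sum (f := fun k => (i : ℝ) ^ k / (k.factorial : ℝ)) ?_ ?_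
    · intro k _; positivity
    · exact Finset.mem_range.mpr (by omega)
  calc (((i * Δ).choose (i - 1) : ℕ) : ℝ)
      ≤ ((i * Δ : ℕ) : ℝ) ^ (i - 1) / ((i - 1).factorial : ℝ) := Nat.choose_le_pow_div _ _
    _ = ((i : ℝ) ^ (i - 1) / ((i - 1).factorial : ℝ)) * (Δ : ℝ) ^ (i - 1) := by
        push_cast; ring
    _ ≤ Real.exp i * (Δ : ℝ) ^ (i - 1) := by
        apply mul_le_mul_of_nonneg_right hterm (by positivity)
    _ ≤ Real.exp i * (Δ : ℝ) ^ i := by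
        apply mul_le_mul_of_nonneg_left ?_ (Real.exp_nonneg _)
        exact pow_le_pow_right₀ (by exact_mod_cast hΔ) (by omega)
    _ = (Real.exp 1) ^ i * (Δ : ℝ) ^ i := by
        rw [← Real.exp_nat_mul, mul_one]
    _ = (Real.exp 1 * Δ) ^ i := (mul_pow _ _ _).symm

noncomputable def treeFinset {Δ : ℕ} (T : MTLLL.LabTree Δ) : Finset (List (Fin Δ)) :=
  T.2.1.toFinset

lemma treeFinset_coe {Δ : ℕ} (T : MTLLL.LabTree Δ) :
    ((treeFinset T : Finset (List (Fin Δ))) : Set (List (Fin Δ))) = T.1 :=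
  Set.Finite.coe_toFinset _

lemma treeFinset_card {Δ : ℕ} {i : ℕ} (T : MTLLL.LabTree Δ) (h : T.size = i) :
    (treeFinset T).card = i := by
  show T.2.1.toFinset.card = i
  rw [← Set.ncard_eq_toFinset_card _ T.2.1]
  exact h

lemma treeFinset_pc {Δ : ℕ} (T : MTLLL.LabTree Δ) :
    MTLLL.PrefClosed ((treeFinset T : Finset (List (Fin Δ))) : Set (List (Fin Δ))) := by
  rw [treeFinset_coe]
  exact T.2.2

/-- The encoding map on trees of size `i`. -/
noncomputable def encT {Δ i : ℕ} (T : {T : MTLLL.LabTree Δ // T.size = i}) :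
    Finset (Fin i × Fin Δ) :=
  enc (treeFinset T.1) (treeFinset_card T.1 T.2)

lemma encT_injective {Δ i : ℕ} : Function.Injective (encT (Δ := Δ) (i := i)) := by
  intro T T' h
  have hF : treeFinset T.1 = treeFinset T'.1 :=
    enc_injective (treeFinset_card T.1 T.2) (treeFinset_card T'.1 T'.2)
      (treeFinset_pc T.1) (treeFinset_pc T'.1) h

  have hS : T.1.1 = T'.1.1 := by
    rw [← treeFinset_coe T.1, ← treeFinset_coe T'.1, hF]
  exact Subtype.ext (Subtype.ext hS)

lemma encT_card {Δ i : ℕ} (hi : 1 ≤ i) (T : {T : MTLLL.LabTree Δ // T.size = i}) :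
    (encT T).card = i - 1 :=
  enc_card (treeFinset_card T.1 T.2) (treeFinset_pc T.1) hi

end MTcount

open MTLLL in
/-- Lemma 3.6(a): the number `P_i` of isomorphism classes of `Δ`-labelled trees with `i`
vertices is at most `(eΔ)^i`. -/
theorem count_labelled_trees (Δ : ℕ) (hΔ : 1 ≤ Δ) (i : ℕ) (hi : 1 ≤ i) :
    (Nat.card {T : LabTree Δ // T.size = i} : ℝ) ≤ (Real.exp 1 * Δ) ^ i := by
  classical
  have hcard : Nat.card {T : LabTree Δ // T.size = i}
      ≤ Nat.card {A : Finset (Fin i × Fin Δ) // A.card = i - 1} := by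
    apply Nat.card_le_card_of_injective
      (fun T => (⟨MTcount.encT T, MTcount.encT_card hi T⟩ :
        {A : Finset (Fin i × Fin Δ) // A.card = i - 1}))
    intro T T' h
    exact MTcount.encT_injective (congrArg Subtype.val h)
  have hcount : Nat.card {A : Finset (Fin i × Fin Δ) // A.card = i - 1}
      = (i * Δ).choose (i - 1) := by
    rw [Nat.card_eq_fintype_card, Fintype.card_finset_len]
    simp
  calc (Nat.card {T : LabTree Δ // T.size = i} : ℝ)
      ≤ ((i * Δ).choose (i - 1) : ℕ) := by exact_mod_cast hcount ▸ hcard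
    _ ≤ (Real.exp 1 * Δ) ^ i := MTcount.choose_bound Δ i hΔ hi
end

section
/- For every Δ ∈ ℕ₊, every k ∈ ℕ₊ and every i ∈ ℕ, the number R_{k,i} of sequences (T_0,…,T_{k−1}) of isomorphism classes of Δ-labelled trees such that Σ_{j<k} |V(T_j)| = i satisfies R_{k,i} ≤ (i+1)^{k−1}·(eΔ)^i. -/
open MeasureTheory
open scoped Classical ENNReal

namespace MTAux

variable {Δ : ℕ}

def PCF (F : Finset (List (Fin Δ))) : Prop := ∀ l ∈ F, ∀ l', l' <+: l → l' ∈ F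

lemma not_lex_append {α : Type*} [LinearOrder α] :
    ∀ (l t : List α), ¬ List.Lex (· < ·) (l ++ t) l
  | [], t, h => List.not_lex_nil h
  | a :: l, t, h => by
    cases h with
    | cons h => exact not_lex_append l t h
    | rel h => exact lt_irrefl a h

lemma prefix_le {l l' : List (Fin Δ)} (h : l <+: l') : l ≤ l' := by
  obtain ⟨t, rfl⟩ := h
  exact le_of_not_gt (not_lex_append l t)

lemma exists_cand : ∀ (a x : List (Fin Δ)), a < x →
    ∃ (w : List (Fin Δ)) (d : Fin Δ), w <+: a ∧ (w ++ [d]) <+: x ∧ a < w ++ [d]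
  | [], [], h => absurd h (List.not_lex_nil)
  | [], b :: x', _ => ⟨[], b, List.nil_prefix, ⟨x', rfl⟩, List.Lex.nil⟩
  | a0 :: a', [], h => absurd h (List.not_lex_nil)
  | a0 :: a', b :: x', h => by
    cases h with
    | rel hr => exact ⟨[], b, List.nil_prefix, ⟨x', rfl⟩, List.Lex.rel hr⟩
    | cons h' =>
      obtain ⟨w, d, hw, hwx, hlt⟩ := exists_cand a' x' h'
      exact ⟨a0 :: w, d, List.cons_prefix_cons.mpr ⟨rfl, hw⟩,
        List.cons_prefix_cons.mpr ⟨rfl, hwx⟩, List.Lex.cons hlt⟩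


noncomputable def rk (F : Finset (List (Fin Δ))) (w : List (Fin Δ)) : ℕ :=
  (F.filter (fun x => x < w)).card

variable {F : Finset (List (Fin Δ))} {a b w : List (Fin Δ)}

lemma rk_lt_rk (ha : a ∈ F) (h : a < b) : rk F a < rk F b := by
  apply Finset.card_lt_card
  constructor
  · intro x hx
    rw [Finset.mem_filter] at hx ⊢
    exact ⟨hx.1, hx.2.trans h⟩
  · intro hsub
    have : a ∈ F.filter (fun x => x < b) := Finset.mem_filter.mpr ⟨ha, h⟩
    have := hsub this
    rw [Finset.mem_filter] at this
    exact lt_irrefl a this.2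

lemma rk_mono (ha : a ∈ F) (h : a ≤ b) : rk F a ≤ rk F b := by
  rcases eq_or_lt_of_le h with rfl | h
  · exact le_rfl
  · exact (rk_lt_rk ha h).le

lemma lt_of_rk_lt (hb : b ∈ F) (h : rk F a < rk F b) : a < b := by
  by_contra hab
  exact absurd (rk_mono hb (not_lt.mp hab) : rk F b ≤ rk F a) (by omega)

lemma rk_injOn (ha : a ∈ F) (hb : b ∈ F) (h : rk F a = rk F b) : a = b := by
  rcases lt_trichotomy a b with hl | hl | hl
  · exact absurd (rk_lt_rk ha hl) (by omega)
  · exact hl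
  · exact absurd (rk_lt_rk hb hl) (by omega)

lemma rk_lt_card (ha : a ∈ F) : rk F a < F.card := by
  apply Finset.card_lt_card
  constructor
  · exact Finset.filter_subset _ _
  · intro hsub
    have := hsub ha
    rw [Finset.mem_filter] at this
    exact lt_irrefl a this.2

lemma rk_surj {j : ℕ} (hj : j < F.card) : ∃ a ∈ F, rk F a = j := by
  have := Finset.surj_on_of_inj_on_of_card_le (s := F) (t := Finset.range F.card)
    (fun a _ => rk F a) (fun a ha => Finset.mem_range.mpr (rk_lt_card ha))
    (fun a b ha hb h => rk_injOn ha hb h)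
    (by simp) j (Finset.mem_range.mpr hj)
  obtain ⟨a, ha, h⟩ := this
  exact ⟨a, ha, h.symm⟩

lemma rk_nil : rk F ([] : List (Fin Δ)) = 0 := by
  rw [rk, Finset.card_eq_zero, Finset.filter_eq_empty_iff]
  intro x _
  exact List.not_lex_nil

lemma nil_mem (hPC : PCF F) (hne : F.Nonempty) : ([] : List (Fin Δ)) ∈ F := by
  obtain ⟨x, hx⟩ := hne
  exact hPC x hx [] List.nil_prefix

/-- The edge encoding of a prefix-closed finset. -/
noncomputable def encF (F : Finset (List (Fin Δ))) : Finset (ℕ × Fin Δ) :=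
  (F.erase []).attach.image
    (fun x => (rk F x.1.dropLast, x.1.getLast (Finset.ne_of_mem_erase x.2)))

lemma mem_encF (hPC : PCF F) (hw : w ∈ F) (d : Fin Δ) :
    (rk F w, d) ∈ encF F ↔ w ++ [d] ∈ F := by
  constructor
  · rintro h
    rw [encF, Finset.mem_image] at h
    obtain ⟨⟨x, hx⟩, -, hval⟩ := h
    have hxF : x ∈ F := Finset.mem_of_mem_erase hx
    have hxne : x ≠ [] := Finset.ne_of_mem_erase hx
    have hd : x.dropLast ∈ F := hPC x hxF _ (List.dropLast_prefix x)
    have h1 : rk F x.dropLast = rk F w := congrArg Prod.fst hval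
    have h2 : x.getLast hxne = d := congrArg Prod.snd hval
    have : x.dropLast = w := rk_injOn hd hw h1
    have := List.dropLast_append_getLast hxne
    rw [this.symm, ‹x.dropLast = w›, h2] at hxF
    exact hxF
  · intro h
    have hne : w ++ [d] ≠ [] := by simp
    have hmem : w ++ [d] ∈ F.erase [] := Finset.mem_erase.mpr ⟨hne, h⟩
    rw [encF, Finset.mem_image]
    refine ⟨⟨w ++ [d], hmem⟩, Finset.mem_attach _ _, ?_⟩
    simp [List.dropLast_concat, List.getLast_concat]

lemma encF_card (hPC : PCF F) : (encF F).card = F.card - 1 := by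
  rcases Finset.eq_empty_or_nonempty F with rfl | hne
  · simp [encF]
  · rw [encF, Finset.card_image_of_injective _ ?_, Finset.card_attach,
      Finset.card_erase_of_mem (nil_mem hPC hne)]
    rintro ⟨x, hx⟩ ⟨y, hy⟩ h
    have hxF : x ∈ F := Finset.mem_of_mem_erase hx
    have hyF : y ∈ F := Finset.mem_of_mem_erase hy
    have h1 : rk F x.dropLast = rk F y.dropLast := congrArg Prod.fst h
    have h2 : x.getLast (Finset.ne_of_mem_erase hx) = y.getLast (Finset.ne_of_mem_erase hy) :=
      congrArg Prod.snd h
    have hdx : x.dropLast ∈ F := hPC x hxF _ (List.dropLast_prefix x)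
    have hdy : y.dropLast ∈ F := hPC y hyF _ (List.dropLast_prefix y)
    have hde : x.dropLast = y.dropLast := rk_injOn hdx hdy h1
    apply Subtype.ext
    calc x = x.dropLast ++ [x.getLast (Finset.ne_of_mem_erase hx)] :=
            (List.dropLast_append_getLast _).symm
      _ = y.dropLast ++ [y.getLast (Finset.ne_of_mem_erase hy)] := by rw [hde, h2]
      _ = y := List.dropLast_append_getLast _

lemma encF_subset (hPC : PCF F) :
    encF F ⊆ Finset.range F.card ×ˢ (Finset.univ : Finset (Fin Δ)) := by
  intro p hp
  rw [encF, Finset.mem_image] at hp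
  obtain ⟨⟨x, hx⟩, -, rfl⟩ := hp
  have hxF : x ∈ F := Finset.mem_of_mem_erase hx
  have hd : x.dropLast ∈ F := hPC x hxF _ (List.dropLast_prefix x)
  simp [Finset.mem_range, rk_lt_card hd]

end MTAux

namespace MTAux
variable {Δ : ℕ}

lemma encF_inj {F F' : Finset (List (Fin Δ))} (hPC : PCF F) (hPC' : PCF F')
    (hcard : F.card = F'.card) (henc : encF F = encF F') : F = F' := by
  have main : ∀ j : ℕ, ∀ x, x ∈ F → rk F x = j → x ∈ F' ∧ rk F' x = j := by
    intro j
    induction j using Nat.strong_induction_on with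
    | _ j IH =>
      intro x hx hrk
      rcases Nat.eq_zero_or_pos j with rfl | hj
      · have hxnil : x = [] := by
          by_contra hne
          have h1 : ([] : List (Fin Δ)) < x :=
            lt_of_le_of_ne (prefix_le List.nil_prefix) (Ne.symm hne)
          have h2 := rk_lt_rk (nil_mem hPC ⟨x, hx⟩) h1
          rw [rk_nil] at h2; omega
        subst hxnil
        have hne' : F'.Nonempty := by
          rw [← Finset.card_pos, ← hcard, Finset.card_pos]; exact ⟨_, hx⟩
        exact ⟨nil_mem hPC' hne', rk_nil⟩
      · obtain ⟨j, rfl⟩ : ∃ m, j = m + 1 := ⟨j - 1, by omega⟩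
        have hjlt : j < F.card := by have := rk_lt_card hx; omega
        obtain ⟨a, haF, hark⟩ := rk_surj hjlt
        obtain ⟨haF', hark'⟩ := IH j (by omega) a haF hark
        have hax : a < x := lt_of_rk_lt hx (by omega)
        obtain ⟨w, d, hwa, hwx, hawd⟩ := exists_cand a x hax
        have hwF : w ∈ F := hPC a haF w hwa
        have hwdF : w ++ [d] ∈ F := hPC x hx _ hwx
        have hrkw : rk F w ≤ j := by
          have := rk_mono hwF (prefix_le hwa); omega
        obtain ⟨hwF', hrkw'⟩ := IH (rk F w) (by omega) w hwF rfl
        have hmem : (rk F w, d) ∈ encF F := (mem_encF hPC hwF d).mpr hwdF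
        rw [henc] at hmem
        have hwdF' : w ++ [d] ∈ F' := (mem_encF hPC' hwF' d).mp (by rw [hrkw']; exact hmem)
        have h1 : j < rk F (w ++ [d]) := by
          have := rk_lt_rk haF hawd; omega
        have h2 : rk F (w ++ [d]) ≤ j + 1 := by
          have := rk_mono hwdF (prefix_le hwx); omega
        have hxeq : w ++ [d] = x := rk_injOn hwdF hx (by omega)
        rw [hxeq] at hwdF'
        refine ⟨hwdF', ?_⟩
        have hlow : j < rk F' x := by
          have := rk_lt_rk haF' hax; omega
        by_contra hne
        have hhigh : j + 1 < rk F' x := by omega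
        have hjcard : j + 1 < F'.card := by
          have := rk_lt_card hwdF'; omega
        obtain ⟨y, hyF', hyrk⟩ := rk_surj (F := F') hjcard
        have hay : a < y := lt_of_rk_lt hyF' (by omega)
        have hyx : y < x := lt_of_rk_lt hwdF' (by omega)
        obtain ⟨w', d', hw'a, hw'y, haw'⟩ := exists_cand a y hay
        have hw'F : w' ∈ F := hPC a haF w' hw'a
        have hw'dF' : w' ++ [d'] ∈ F' := hPC' y hyF' _ hw'y
        have hrkw2 : rk F w' ≤ j := by
          have := rk_mono hw'F (prefix_le hw'a); omega
        obtain ⟨hw'F', hrkw2'⟩ := IH (rk F w') (by omega) w' hw'F rfl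
        have hmem2 : (rk F' w', d') ∈ encF F' := (mem_encF hPC' hw'F' d').mpr hw'dF'
        rw [← henc, hrkw2'] at hmem2
        have hw'dF : w' ++ [d'] ∈ F := (mem_encF hPC hw'F d').mp hmem2
        have k1 : j < rk F' (w' ++ [d']) := by
          have := rk_lt_rk haF' haw'; omega
        have k2 : rk F' (w' ++ [d']) ≤ j + 1 := by
          have := rk_mono hw'dF' (prefix_le hw'y); omega
        have hyeq : w' ++ [d'] = y := rk_injOn hw'dF' hyF' (by omega)
        rw [hyeq] at hw'dF
        have c1 : j < rk F y := by have := rk_lt_rk haF hay; omega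
        have c2 : rk F y < j + 1 := by have := rk_lt_rk hw'dF hyx; omega
        omega
  apply Finset.eq_of_subset_of_card_le _ (le_of_eq hcard.symm)
  intro x hx
  exact (main (rk F x) x hx rfl).1

end MTAux

namespace MTAux
open MTLLL

variable {Δ : ℕ}

noncomputable def tF (T : LabTree Δ) : Finset (List (Fin Δ)) := T.2.1.toFinset

lemma tF_card (T : LabTree Δ) : (tF T).card = T.size :=
  (Set.ncard_eq_toFinset_card T.1 T.2.1).symm

lemma tF_PC (T : LabTree Δ) : PCF (tF T) := by
  intro l hl l' hp
  rw [tF, Set.Finite.mem_toFinset] at hl ⊢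
  exact T.2.2 l hl l' hp

lemma tF_inj {T T' : LabTree Δ} (h : tF T = tF T') : T = T' :=
  Subtype.ext (Set.Finite.toFinset_inj.mp h)

lemma fiber_card_le (Δ n : ℕ) :
    Nat.card {T : LabTree Δ // T.size = n} ≤ (n * Δ).choose (n - 1) := by
  classical
  set tgt := Finset.powersetCard (n - 1)
    (Finset.range n ×ˢ (Finset.univ : Finset (Fin Δ))) with htgt
  have hmap : ∀ T : {T : LabTree Δ // T.size = n}, encF (tF T.1) ∈ tgt := by
    intro T
    rw [htgt, Finset.mem_powersetCard]
    have hc : (tF T.1).card = n := by rw [tF_card, T.2]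
    constructor
    · have h := encF_subset (tF_PC T.1)
      rwa [hc] at h
    · rw [encF_card (tF_PC T.1), hc]
  have inj : Function.Injective
      (fun T : {T : LabTree Δ // T.size = n} =>
        (⟨encF (tF T.1), hmap T⟩ : {A // A ∈ tgt})) := by
    intro T T' h
    have h' : encF (tF T.1) = encF (tF T'.1) := congrArg Subtype.val h
    have hF : tF T.1 = tF T'.1 := encF_inj (tF_PC _) (tF_PC _)
      (by rw [tF_card, tF_card, T.2, T'.2]) h'
    exact Subtype.ext (tF_inj hF)
  calc Nat.card {T : LabTree Δ // T.size = n}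
      ≤ Nat.card {A // A ∈ tgt} := Nat.card_le_card_of_injective _ inj
    _ = tgt.card := Nat.card_eq_finsetCard tgt
    _ = (n * Δ).choose (n - 1) := by
        rw [htgt, Finset.card_powersetCard, Finset.card_product, Finset.card_range,
          Finset.card_univ, Fintype.card_fin]

lemma fiber_finite (Δ n : ℕ) : Finite {T : LabTree Δ // T.size = n} := by
  classical
  set tgt := Finset.powersetCard (n - 1)
    (Finset.range n ×ˢ (Finset.univ : Finset (Fin Δ))) with htgt
  have hmap : ∀ T : {T : LabTree Δ // T.size = n}, encF (tF T.1) ∈ tgt := by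
    intro T
    rw [htgt, Finset.mem_powersetCard]
    have hc : (tF T.1).card = n := by rw [tF_card, T.2]
    constructor
    · have h := encF_subset (tF_PC T.1)
      rwa [hc] at h
    · rw [encF_card (tF_PC T.1), hc]
  refine Finite.of_injective
    (fun T : {T : LabTree Δ // T.size = n} => (⟨encF (tF T.1), hmap T⟩ : {A // A ∈ tgt})) ?_
  intro T T' h
  have h' : encF (tF T.1) = encF (tF T'.1) := congrArg Subtype.val h
  have hF : tF T.1 = tF T'.1 := encF_inj (tF_PC _) (tF_PC _)
    (by rw [tF_card, tF_card, T.2, T'.2]) h'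
  exact Subtype.ext (tF_inj hF)

lemma fiber_real {Δ : ℕ} (hΔ : 1 ≤ Δ) (n : ℕ) :
    (Nat.card {T : LabTree Δ // T.size = n} : ℝ) ≤ (Real.exp 1 * Δ) ^ n := by
  have hΔr : (1 : ℝ) ≤ (Δ : ℝ) := by exact_mod_cast hΔ
  have h1 : (Nat.card {T : LabTree Δ // T.size = n} : ℝ) ≤ ((n * Δ).choose (n - 1) : ℝ) :=
    Nat.cast_le.mpr (fiber_card_le Δ n)
  refine h1.trans ?_
  rcases n with _ | m
  · simp
  · have h2 : (((m + 1) * Δ).choose m : ℝ) ≤ (((m + 1) * Δ : ℕ) : ℝ) ^ m / m.factorial :=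
      Nat.choose_le_pow_div m ((m + 1) * Δ)
    have h3 : ((m + 1 : ℝ)) ^ m / m.factorial ≤ Real.exp (m + 1) := by
      have hsum := Real.sum_le_exp_of_nonneg (x := (m + 1 : ℝ)) (by positivity) (m + 1)
      have ht := Finset.single_le_sum
        (f := fun i => ((m + 1 : ℝ)) ^ i / i.factorial)
        (s := Finset.range (m + 1)) (fun i _ => by positivity)
        (Finset.self_mem_range_succ m)
      linarith
    have hexp : Real.exp ((m : ℝ) + 1) = Real.exp 1 ^ (m + 1) := by
      rw [Real.exp_one_pow]
      norm_num
    have hcast : (((m + 1) * Δ : ℕ) : ℝ) = (m + 1 : ℝ) * (Δ : ℝ) := by push_cast; ring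
    have key : (((m + 1) * Δ : ℕ) : ℝ) ^ m / (m.factorial : ℝ) ≤ (Real.exp 1 * Δ) ^ (m + 1) := by
      rw [hcast, mul_pow, mul_comm ((m + 1 : ℝ) ^ m), mul_div_assoc]
      calc (Δ : ℝ) ^ m * ((m + 1 : ℝ) ^ m / m.factorial)
          ≤ (Δ : ℝ) ^ m * Real.exp ((m : ℝ) + 1) := by
            apply mul_le_mul_of_nonneg_left (by push_cast at h3 ⊢; linarith) (by positivity)
        _ = (Δ : ℝ) ^ m * Real.exp 1 ^ (m + 1) := by rw [hexp]
        _ ≤ (Δ : ℝ) ^ (m + 1) * Real.exp 1 ^ (m + 1) := by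
            apply mul_le_mul_of_nonneg_right (pow_le_pow_right₀ hΔr (by omega)) (by positivity)
        _ = (Real.exp 1 * Δ) ^ (m + 1) := by rw [mul_pow]; ring
    have hsub : (m + 1) - 1 = m := by omega
    rw [hsub] at h1 ⊢
    exact le_trans h2 key

lemma comp_inj (m i : ℕ) :
    ∃ φ : {a : Fin (m + 1) → ℕ // ∑ j, a j = i} → (Fin m → Fin (i + 1)),
      Function.Injective φ := by
  refine ⟨fun a j => ⟨a.1 j.succ, ?_⟩, ?_⟩
  · have hle : a.1 j.succ ≤ ∑ j, a.1 j :=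
      Finset.single_le_sum (fun _ _ => Nat.zero_le _) (Finset.mem_univ _)
    have h2 := a.2
    omega
  · intro a b h
    have hs : ∀ j : Fin m, a.1 j.succ = b.1 j.succ := fun j =>
      congrArg Fin.val (congrFun h j)
    have h0 : a.1 0 = b.1 0 := by
      have ha := a.2; have hb := b.2
      rw [Fin.sum_univ_succ] at ha hb
      have hss : ∑ j : Fin m, a.1 j.succ = ∑ j : Fin m, b.1 j.succ :=
        Finset.sum_congr rfl (fun j _ => hs j)
      omega
    apply Subtype.ext; funext x
    exact Fin.cases h0 hs x

lemma comp_finite (m i : ℕ) : Finite {a : Fin (m + 1) → ℕ // ∑ j, a j = i} := by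
  obtain ⟨φ, hφ⟩ := comp_inj m i
  exact Finite.of_injective φ hφ

lemma comp_card_le (m i : ℕ) :
    Nat.card {a : Fin (m + 1) → ℕ // ∑ j, a j = i} ≤ (i + 1) ^ m := by
  obtain ⟨φ, hφ⟩ := comp_inj m i
  calc Nat.card {a : Fin (m + 1) → ℕ // ∑ j, a j = i}
      ≤ Nat.card (Fin m → Fin (i + 1)) := Nat.card_le_card_of_injective φ hφ
    _ = (i + 1) ^ m := by simp [Nat.card_eq_fintype_card]

end MTAux


open MTAux

open MTLLL in
/-- Lemma 3.6(b): the number `R_{k,i}` of `k`-tuples of isomorphism classes of `Δ`-labelled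
trees with `i` vertices in total is at most `(i+1)^{k-1} (eΔ)^i`. -/
theorem count_labelled_forest_sequences (Δ : ℕ) (hΔ : 1 ≤ Δ) (k : ℕ) (hk : 1 ≤ k) (i : ℕ) :
    (Nat.card {T : Fin k → LabTree Δ // ∑ j : Fin k, (T j).size = i} : ℝ)
      ≤ (i + 1 : ℝ) ^ (k - 1) * (Real.exp 1 * Δ) ^ i := by
  obtain ⟨m, rfl⟩ : ∃ m, k = m + 1 := ⟨k - 1, by omega⟩
  haveI hA : Finite {a : Fin (m + 1) → ℕ // ∑ j, a j = i} := comp_finite m i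
  haveI hfib : ∀ n, Finite {T : LabTree Δ // T.size = n} := fiber_finite Δ
  letI : Fintype {a : Fin (m + 1) → ℕ // ∑ j, a j = i} := Fintype.ofFinite _
  letI fibFT : ∀ n, Fintype {T : LabTree Δ // T.size = n} := fun n => Fintype.ofFinite _
  set A := {a : Fin (m + 1) → ℕ // ∑ j, a j = i} with hAdef
  -- the injection into the sigma type
  set Sig := (Σ a : A, ∀ j : Fin (m + 1), {T : LabTree Δ // T.size = a.1 j}) with hSig
  have hinj : ∃ ψ : {T : Fin (m + 1) → LabTree Δ // ∑ j : Fin (m + 1), (T j).size = i} → Sig,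
      Function.Injective ψ := by
    refine ⟨fun T => ⟨⟨fun j => (T.1 j).size, T.2⟩, fun j => ⟨T.1 j, rfl⟩⟩, ?_⟩
    intro T T' h
    have hval : ∀ j : Fin (m + 1), T.1 j = T'.1 j := by
      intro j
      exact congrArg (fun p : Sig => ((p.2 j).1)) h
    exact Subtype.ext (funext hval)
  obtain ⟨ψ, hψ⟩ := hinj
  have step1 : (Nat.card {T : Fin (m + 1) → LabTree Δ // ∑ j : Fin (m + 1), (T j).size = i} : ℝ)
      ≤ (Nat.card Sig : ℝ) := by
    exact_mod_cast Nat.card_le_card_of_injective ψ hψ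
  have step2 : (Nat.card Sig : ℝ)
      = ∑ a : A, ∏ j : Fin (m + 1), (Nat.card {T : LabTree Δ // T.size = a.1 j} : ℝ) := by
    rw [hSig, Nat.card_eq_fintype_card, Fintype.card_sigma]
    push_cast
    refine Finset.sum_congr rfl (fun a _ => ?_)
    rw [Fintype.card_pi]
    push_cast
    refine Finset.prod_congr rfl (fun j _ => ?_)
    rw [Nat.card_eq_fintype_card]
  have step3 : ∀ a : A, ∏ j : Fin (m + 1), (Nat.card {T : LabTree Δ // T.size = a.1 j} : ℝ)
      ≤ (Real.exp 1 * Δ) ^ i := by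
    intro a
    have hle : ∏ j : Fin (m + 1), (Nat.card {T : LabTree Δ // T.size = a.1 j} : ℝ)
        ≤ ∏ j : Fin (m + 1), (Real.exp 1 * Δ) ^ (a.1 j) := by
      apply Finset.prod_le_prod (fun j _ => Nat.cast_nonneg _)
      exact fun j _ => fiber_real hΔ (a.1 j)
    rw [Finset.prod_pow_eq_pow_sum, a.2] at hle
    exact hle
  have hcA : (Fintype.card A : ℝ) ≤ (i + 1 : ℝ) ^ m := by
    have := comp_card_le m i
    rw [Nat.card_eq_fintype_card] at this
    calc (Fintype.card A : ℝ) ≤ ((i + 1) ^ m : ℕ) := by exact_mod_cast this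
      _ = (i + 1 : ℝ) ^ m := by push_cast; ring
  have hpos : (0 : ℝ) ≤ (Real.exp 1 * Δ) ^ i := by positivity
  calc (Nat.card {T : Fin (m + 1) → LabTree Δ // ∑ j : Fin (m + 1), (T j).size = i} : ℝ)
      ≤ (Nat.card Sig : ℝ) := step1
    _ = ∑ a : A, ∏ j : Fin (m + 1), (Nat.card {T : LabTree Δ // T.size = a.1 j} : ℝ) := step2
    _ ≤ ∑ _a : A, (Real.exp 1 * Δ) ^ i := Finset.sum_le_sum (fun a _ => step3 a)
    _ = (Fintype.card A : ℝ) * (Real.exp 1 * Δ) ^ i := by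
        rw [Finset.sum_const, Finset.card_univ, nsmul_eq_mul]
    _ ≤ (i + 1 : ℝ) ^ m * (Real.exp 1 * Δ) ^ i := by
        apply mul_le_mul_of_nonneg_right hcA hpos
    _ = (i + 1 : ℝ) ^ (m + 1 - 1) * (Real.exp 1 * Δ) ^ i := by norm_num
end

section
/- Let M = (G,𝐑,π) be a Moser–Tardos tuple with G a finite digraph, and let L be a finalised M-landscape. Then there exists a grounded finalised M-landscape K that is equivalent to L, i.e. the forest of K is grounded, |V(K)| = |V(L)| and Used_K = Used_L. -/
open MeasureTheory
open scoped Classical ENNReal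

namespace MTLLL

section Helpers

variable {V : Type*} {E : V → V → Prop} {b : ℕ} {R : LocalRule E b}

lemma rel_symm {x y : V} (h : Rel E x y) : Rel E y x := by
  obtain ⟨z, hz1, hz2⟩ := h
  exact ⟨z, hz2, hz1⟩

lemma var_nonempty (L : FinLandscape E b R) {a : V × ℕ} (ha : a ∈ L.F.verts) :
    (Var E a.1).Nonempty := by
  rcases Set.eq_empty_or_nonempty (Var E a.1) with h | h
  · have h2 := L.vio_not_mem ⟨a, ha⟩
    rw [LocalRule.Rc, R.isFull_of_empty _ h] at h2
    simp at h2
  · exact h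

lemma verts_finite [Fintype V] (L : FinLandscape E b R) : L.F.verts.Finite := by
  obtain ⟨j, hj⟩ := L.finHeight
  apply Set.Finite.subset (Set.finite_univ.prod (Set.finite_Iio j))
  intro a ha
  exact ⟨Set.mem_univ _, hj a ha⟩

/-- The `i`-th entry of `Used L x` (before the final value). -/
noncomputable def entry (L : FinLandscape E b R) (x : V) (i : ℕ) : Option (Fin b) :=
  if h : ∃ y : V, ∃ _ : (y, i) ∈ L.F.verts, x ∈ Var E y then
    some (L.vio ⟨(h.choose, i), h.choose_spec.choose⟩ ⟨x, h.choose_spec.choose_spec⟩)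
  else none

lemma used_eq_entry (L : FinLandscape E b R) (x : V) :
    L.Used x = ((List.range (Nat.find L.finHeight)).filterMap (entry L x)) ++ [L.fin x] := rfl

lemma watcher_unique (L : FinLandscape E b R) {x y y' : V} {i : ℕ}
    (hy : (y, i) ∈ L.F.verts) (hy' : (y', i) ∈ L.F.verts)
    (hw : x ∈ Var E y) (hw' : x ∈ Var E y') : y = y' := by
  by_contra hne
  exact L.levelIndep i y hy y' hy' hne ⟨x, hw, hw'⟩

lemma vio_congr (L : FinLandscape E b R) {p q : V × ℕ} (hpq : p = q)
    (h1 : p ∈ L.F.verts) (h2 : q ∈ L.F.verts) {w : V}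
    (hw1 : w ∈ Var E p.1) (hw2 : w ∈ Var E q.1) :
    L.vio ⟨p, h1⟩ ⟨w, hw1⟩ = L.vio ⟨q, h2⟩ ⟨w, hw2⟩ := by subst hpq; rfl

lemma entry_eq_some (L : FinLandscape E b R) {x y : V} {i : ℕ}
    (hy : (y, i) ∈ L.F.verts) (hw : x ∈ Var E y) :
    entry L x i = some (L.vio ⟨(y, i), hy⟩ ⟨x, hw⟩) := by
  have hex : ∃ z : V, ∃ _ : (z, i) ∈ L.F.verts, x ∈ Var E z := ⟨y, hy, hw⟩
  rw [entry, dif_pos hex]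
  have hcz : hex.choose = y :=
    watcher_unique L hex.choose_spec.choose hy hex.choose_spec.choose_spec hw
  congr 1
  exact vio_congr L (by rw [hcz]) _ _ _ _

lemma entry_eq_none (L : FinLandscape E b R) {x : V} {i : ℕ}
    (h : ∀ y : V, (y, i) ∈ L.F.verts → x ∉ Var E y) : entry L x i = none := by
  rw [entry, dif_neg]
  rintro ⟨y, hy, hw⟩
  exact h y hy hw

lemma filterMap_congr' {α β : Type*} {f g : α → Option β} :
    ∀ l : List α, (∀ a ∈ l, f a = g a) → l.filterMap f = l.filterMap g
  | [], _ => rfl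
  | a :: l, h => by
    rw [List.filterMap_cons, List.filterMap_cons, h a List.mem_cons_self,
      filterMap_congr' l (fun b hb => h b (List.mem_cons_of_mem a hb))]

lemma filterMap_range_congr {α : Type*} (f : ℕ → Option α) {h1 h2 : ℕ} (hle : h1 ≤ h2)
    (hnone : ∀ i, h1 ≤ i → f i = none) :
    (List.range h2).filterMap f = (List.range h1).filterMap f := by
  obtain ⟨k, rfl⟩ := Nat.exists_eq_add_of_le hle
  rw [List.range_add, List.filterMap_append]
  have hnil : ((List.range k).map (h1 + ·)).filterMap f = [] := by
    rw [List.filterMap_map, List.filterMap_eq_nil_iff]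
    intro a _
    exact hnone _ (Nat.le_add_right _ _)
  rw [hnil, List.append_nil]

lemma filterMap_swap {α : Type*} (f g : ℕ → Option α) (ℓ h : ℕ) (hh : ℓ + 2 ≤ h)
    (hout : ∀ i, i ≠ ℓ → i ≠ ℓ + 1 → f i = g i)
    (hmid : (f ℓ = g ℓ ∧ f (ℓ + 1) = g (ℓ + 1)) ∨
      (∃ v, f ℓ = some v ∧ f (ℓ + 1) = none ∧ g ℓ = none ∧ g (ℓ + 1) = some v)) :
    (List.range h).filterMap f = (List.range h).filterMap g := by
  obtain ⟨k, rfl⟩ : ∃ k, h = ℓ + 2 + k := ⟨h - (ℓ + 2), by omega⟩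
  have hsplit : List.range (ℓ + 2 + k) =
      (List.range ℓ ++ [ℓ, ℓ + 1]) ++ (List.range k).map (ℓ + 2 + ·) := by
    rw [List.range_add, List.range_succ, List.range_succ]
    simp
  rw [hsplit]
  simp only [List.filterMap_append]
  have hA : (List.range ℓ).filterMap f = (List.range ℓ).filterMap g := by
    apply filterMap_congr'
    intro a hal
    have := List.mem_range.mp hal
    exact hout a (by omega) (by omega)
  have hC : ((List.range k).map (ℓ + 2 + ·)).filterMap f
      = ((List.range k).map (ℓ + 2 + ·)).filterMap g := by
    apply filterMap_congr'
    intro a hal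
    obtain ⟨c, -, rfl⟩ := List.mem_map.mp hal
    exact hout _ (by omega) (by omega)
  have hB : ([ℓ, ℓ + 1] : List ℕ).filterMap f = [ℓ, ℓ + 1].filterMap g := by
    rcases hmid with ⟨h1, h2⟩ | ⟨v, h1, h2, h3, h4⟩ <;>
      simp [List.filterMap_cons, h1, h2, *]
  rw [hA, hB, hC]

lemma used_eq_of (K L : FinLandscape E b R) (hfin : K.fin = L.fin) (h : ℕ)
    (hK : ∀ a ∈ K.F.verts, a.2 < h) (hL : ∀ a ∈ L.F.verts, a.2 < h)
    (heq : ∀ w, (List.range h).filterMap (entry K w) = (List.range h).filterMap (entry L w)) :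
    K.Used = L.Used := by
  funext w
  rw [used_eq_entry, used_eq_entry, hfin]
  congr 1
  have hKnone : ∀ i, Nat.find K.finHeight ≤ i → entry K w i = none := by
    intro i hi
    apply entry_eq_none
    intro y hy _
    have := Nat.find_spec K.finHeight (y, i) hy
    omega
  have hLnone : ∀ i, Nat.find L.finHeight ≤ i → entry L w i = none := by
    intro i hi
    apply entry_eq_none
    intro y hy _
    have := Nat.find_spec L.finHeight (y, i) hy
    omega
  rw [← filterMap_range_congr (entry K w) (Nat.find_min' K.finHeight hK) hKnone, heq w,
    filterMap_range_congr (entry L w) (Nat.find_min' L.finHeight hL) hLnone]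

/-- The measure used for the induction: `(sum of levels) * (#verts + 1) + #airborne roots`. -/
noncomputable def levsum (L : FinLandscape E b R) : ℕ := ∑ᶠ a ∈ L.F.verts, (a : V × ℕ).2

noncomputable def mu (L : FinLandscape E b R) : ℕ :=
  levsum L * (L.F.verts.ncard + 1) + (airborneRoots L.F).ncard

lemma airborne_subset (F : GForest E) : airborneRoots F ⊆ F.verts := fun _ hp => hp.1

end Helpers

end MTLLL
namespace MTLLL

section Cases

variable {V : Type*} [Fintype V] {E : V → V → Prop} {b : ℕ} {R : LocalRule E b}

lemma case1 (L : FinLandscape E b R) (x y : V) (ℓ : ℕ)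
    (ha : (x, ℓ + 1) ∈ L.F.verts)
    (hroot : ∀ p : V × ℕ, ¬ L.F.edges p (x, ℓ + 1))
    (hy : (y, ℓ) ∈ L.F.verts) (hrel : Rel E y x) :
    ∃ K : FinLandscape E b R,
      mu K < mu L ∧ K.F.verts.ncard = L.F.verts.ncard ∧ K.Used = L.Used := by
  classical
  let K : FinLandscape E b R :=
    { F :=
        { verts := L.F.verts
          edges := fun p q => L.F.edges p q ∨ (p = (y, ℓ) ∧ q = (x, ℓ + 1))
          edges_mem_left := by
            rintro p q (h | ⟨rfl, rfl⟩)
            · exact L.F.edges_mem_left p q h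
            · exact hy
          edges_mem_right := by
            rintro p q (h | ⟨rfl, rfl⟩)
            · exact L.F.edges_mem_right p q h
            · exact ha
          edges_rel := by
            rintro p q (h | ⟨rfl, rfl⟩)
            · exact L.F.edges_rel p q h
            · exact hrel
          edges_level := by
            rintro p q (h | ⟨rfl, rfl⟩)
            · exact L.F.edges_level p q h
            · rfl
          indeg_le_one := by
            rintro c p p' (h | ⟨rfl, rfl⟩) (h' | ⟨h'1, h'2⟩)
            · exact L.F.indeg_le_one c p p' h h'
            · exact absurd (h'2 ▸ h) (hroot p)
            · exact absurd h' (hroot p')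
            · exact h'1.symm }
      levelIndep := L.levelIndep
      finHeight := L.finHeight
      vio := L.vio
      vio_not_mem := L.vio_not_mem
      fin := L.fin }
  refine ⟨K, ?_, rfl, rfl⟩
  have hmuK : mu K = levsum L * (L.F.verts.ncard + 1) + (airborneRoots K.F).ncard := rfl
  rw [hmuK, mu]
  apply Nat.add_lt_add_left
  apply Set.ncard_lt_ncard
  · rw [Set.ssubset_iff_of_subset]
    · refine ⟨(x, ℓ + 1), ⟨ha, hroot, by omega⟩, ?_⟩
      rintro ⟨-, hnr, -⟩
      exact hnr (y, ℓ) (Or.inr ⟨rfl, rfl⟩)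
    · rintro p ⟨hp, hnr, hpos⟩
      exact ⟨hp, fun q hq => hnr q (Or.inl hq), hpos⟩
  · exact (verts_finite L).subset (airborne_subset _)

lemma case2 (L : FinLandscape E b R) (x : V) (ℓ : ℕ)
    (ha : (x, ℓ + 1) ∈ L.F.verts)
    (hroot : ∀ p : V × ℕ, ¬ L.F.edges p (x, ℓ + 1))
    (hcase : ∀ y : V, (y, ℓ) ∈ L.F.verts → ¬ Rel E y x) :
    ∃ K : FinLandscape E b R,
      mu K < mu L ∧ K.F.verts.ncard = L.F.verts.ncard ∧ K.Used = L.Used := by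
  classical
  have hxx : Rel E x x := by
    obtain ⟨w, hw⟩ := var_nonempty L ha
    exact ⟨w, hw, hw⟩
  have hnot : ((x, ℓ) : V × ℕ) ∉ L.F.verts := fun h => hcase x h hxx
  have horig : ∀ p : V × ℕ, p ∈ insert ((x, ℓ) : V × ℕ) (L.F.verts \ {(x, ℓ + 1)}) →
      ((p.1, if p = (x, ℓ) then ℓ + 1 else p.2) : V × ℕ) ∈ L.F.verts := by
    rintro p hp
    rcases Set.mem_insert_iff.mp hp with rfl | ⟨hp1, -⟩
    · simpa using ha
    · have hne : p ≠ (x, ℓ) := fun h => hnot (h ▸ hp1)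
      simpa [hne] using hp1
  let K : FinLandscape E b R :=
    { F :=
        { verts := insert ((x, ℓ) : V × ℕ) (L.F.verts \ {(x, ℓ + 1)})
          edges := fun p q => L.F.edges p q ∧ p ≠ (x, ℓ + 1) ∧ q ≠ (x, ℓ + 1)
          edges_mem_left := fun p q h =>
            Set.mem_insert_iff.mpr (Or.inr ⟨L.F.edges_mem_left p q h.1, h.2.1⟩)
          edges_mem_right := fun p q h =>
            Set.mem_insert_iff.mpr (Or.inr ⟨L.F.edges_mem_right p q h.1, h.2.2⟩)
          edges_rel := fun p q h => L.F.edges_rel p q h.1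
          edges_level := fun p q h => L.F.edges_level p q h.1
          indeg_le_one := fun c p p' h h' => L.F.indeg_le_one c p p' h.1 h'.1 }
      levelIndep := by
        intro i u hu v hv huv hrel
        rcases Set.mem_insert_iff.mp hu with h1 | ⟨h1, -⟩ <;>
          rcases Set.mem_insert_iff.mp hv with h2 | ⟨h2, -⟩
        · rw [Prod.mk.injEq] at h1 h2
          exact huv (h1.1.trans h2.1.symm)
        · rw [Prod.mk.injEq] at h1
          obtain ⟨rfl, rfl⟩ := h1
          exact hcase v h2 (rel_symm hrel)
        · rw [Prod.mk.injEq] at h2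
          obtain ⟨rfl, rfl⟩ := h2
          exact hcase u h1 hrel
        · exact L.levelIndep i u h1 v h2 huv hrel
      finHeight := by
        refine ⟨Nat.find L.finHeight, fun p hp => ?_⟩
        rcases Set.mem_insert_iff.mp hp with rfl | ⟨hp1, -⟩
        · exact lt_trans (Nat.lt_succ_self ℓ) (Nat.find_spec L.finHeight _ ha)
        · exact Nat.find_spec L.finHeight p hp1
      vio := fun p =>
        L.vio ⟨(((p : V × ℕ)).1, if (p : V × ℕ) = (x, ℓ) then ℓ + 1 else ((p : V × ℕ)).2),
          horig _ p.2⟩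
      vio_not_mem := fun p =>
        L.vio_not_mem ⟨(((p : V × ℕ)).1, if (p : V × ℕ) = (x, ℓ) then ℓ + 1
          else ((p : V × ℕ)).2), horig _ p.2⟩
      fin := L.fin }
  have hfinL := verts_finite L
  have hfinW : (insert ((x, ℓ) : V × ℕ) (L.F.verts \ {(x, ℓ + 1)})).Finite :=
    hfinL.diff.insert _
  have hxl_notmem : ((x, ℓ) : V × ℕ) ∉ L.F.verts \ {(x, ℓ + 1)} := fun h => hnot h.1
  have hncard : K.F.verts.ncard = L.F.verts.ncard := by
    show (insert ((x, ℓ) : V × ℕ) (L.F.verts \ {(x, ℓ + 1)})).ncard = _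
    rw [Set.ncard_insert_of_notMem hxl_notmem hfinL.diff,
      Set.ncard_diff_singleton_of_mem ha]
    have h1 : 0 < L.F.verts.ncard := (Set.ncard_pos hfinL).mpr ⟨_, ha⟩
    omega
  -- level-set comparisons
  have hmemW : ((x, ℓ) : V × ℕ) ∈ K.F.verts := Set.mem_insert _ _
  have hWmem : ∀ (z : V) (i : ℕ), (z, i) ∈ K.F.verts ↔
      ((z, i) = (x, ℓ) ∨ ((z, i) ∈ L.F.verts ∧ (z, i) ≠ (x, ℓ + 1))) := by
    intro z i
    show (z, i) ∈ insert ((x, ℓ) : V × ℕ) (L.F.verts \ {(x, ℓ + 1)}) ↔ _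
    simp [Set.mem_insert_iff, Set.mem_diff]
  -- the entry comparisons
  have claim_out : ∀ (w : V) (i : ℕ), i ≠ ℓ → i ≠ ℓ + 1 → entry K w i = entry L w i := by
    intro w i h1 h2
    have hiff : ∀ z : V, ((z, i) ∈ K.F.verts ↔ (z, i) ∈ L.F.verts) := by
      intro z
      rw [hWmem]
      constructor
      · rintro (hz | ⟨hz, -⟩)
        · exact absurd (congrArg Prod.snd hz) h1
        · exact hz
      · intro hz
        exact Or.inr ⟨hz, fun hh => h2 (congrArg Prod.snd hh)⟩
    by_cases hex : ∃ z : V, ∃ _ : (z, i) ∈ L.F.verts, w ∈ Var E z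
    · obtain ⟨z, hz, hwz⟩ := hex
      rw [entry_eq_some L hz hwz, entry_eq_some K ((hiff z).mpr hz) hwz]
      congr 1
      exact vio_congr L (by simp [show (z, i) ≠ ((x, ℓ) : V × ℕ) from
        fun hh => h1 (congrArg Prod.snd hh)]) _ _ _ _
    · rw [entry_eq_none L (fun z hz hwz => hex ⟨z, hz, hwz⟩),
        entry_eq_none K (fun z hz hwz => hex ⟨z, (hiff z).mp hz, hwz⟩)]
  have claim_mid : ∀ w : V,
      (entry K w ℓ = entry L w ℓ ∧ entry K w (ℓ + 1) = entry L w (ℓ + 1)) ∨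
      (∃ v, entry K w ℓ = some v ∧ entry K w (ℓ + 1) = none ∧
        entry L w ℓ = none ∧ entry L w (ℓ + 1) = some v) := by
    intro w
    by_cases hwx : w ∈ Var E x
    · right
      refine ⟨L.vio ⟨(x, ℓ + 1), ha⟩ ⟨w, hwx⟩, ?_, ?_, ?_, ?_⟩
      · rw [entry_eq_some K hmemW hwx]
        congr 1
        exact vio_congr L (by simp) _ _ _ _
      · apply entry_eq_none K
        intro z hz hwz
        rcases (hWmem z (ℓ + 1)).mp hz with hz1 | ⟨hz1, hz2⟩
        · exact absurd (congrArg Prod.snd hz1) (by omega)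
        · have hzx : z ≠ x := fun h => hz2 (by rw [h])
          exact L.levelIndep (ℓ + 1) z hz1 x ha hzx ⟨w, hwz, hwx⟩
      · exact entry_eq_none L (fun z hz hwz => hcase z hz ⟨w, hwz, hwx⟩)
      · exact entry_eq_some L ha hwx
    · left
      constructor
      · by_cases hex : ∃ z : V, ∃ _ : (z, ℓ) ∈ L.F.verts, w ∈ Var E z
        · obtain ⟨z, hz, hwz⟩ := hex
          have hzx : z ≠ x := fun h => hnot (h ▸ hz)
          have hzW : (z, ℓ) ∈ K.F.verts :=
            (hWmem z ℓ).mpr (Or.inr ⟨hz, fun hh => by simp at hh⟩)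
          rw [entry_eq_some L hz hwz, entry_eq_some K hzW hwz]
          congr 1
          exact vio_congr L (by simp [hzx]) _ _ _ _
        · rw [entry_eq_none L (fun z hz hwz => hex ⟨z, hz, hwz⟩),
            entry_eq_none K ?_]
          intro z hz hwz
          rcases (hWmem z ℓ).mp hz with hz1 | ⟨hz1, -⟩
          · have : z = x := congrArg Prod.fst hz1
            exact hwx (this ▸ hwz)
          · exact hex ⟨z, hz1, hwz⟩
      · by_cases hex : ∃ z : V, ∃ _ : (z, ℓ + 1) ∈ L.F.verts, w ∈ Var E z
        · obtain ⟨z, hz, hwz⟩ := hex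
          have hzx : z ≠ x := fun h => hwx (h ▸ hwz)
          have hzW : (z, ℓ + 1) ∈ K.F.verts :=
            (hWmem z (ℓ + 1)).mpr (Or.inr ⟨hz, by simp [hzx]⟩)
          rw [entry_eq_some L hz hwz, entry_eq_some K hzW hwz]
          congr 1
          exact vio_congr L (by simp) _ _ _ _
        · rw [entry_eq_none L (fun z hz hwz => hex ⟨z, hz, hwz⟩),
            entry_eq_none K ?_]
          intro z hz hwz
          rcases (hWmem z (ℓ + 1)).mp hz with hz1 | ⟨hz1, -⟩
          · exact absurd (congrArg Prod.snd hz1) (by omega)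
          · exact hex ⟨z, hz1, hwz⟩
  refine ⟨K, ?_, hncard, ?_⟩
  · -- mu K < mu L
    set S := hfinL.toFinset with hS
    have hWfinset : hfinW.toFinset = insert ((x, ℓ) : V × ℕ) (S.erase (x, ℓ + 1)) := by
      ext p
      simp only [Set.Finite.mem_toFinset, Set.mem_insert_iff, Set.mem_diff,
        Set.mem_singleton_iff, Finset.mem_insert, Finset.mem_erase, hS]
      tauto
    have hmemS : ((x, ℓ + 1) : V × ℕ) ∈ S := by
      rw [hS, Set.Finite.mem_toFinset]; exact ha
    have hnm : ((x, ℓ) : V × ℕ) ∉ S.erase (x, ℓ + 1) := by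
      rw [hS]
      simp only [Finset.mem_erase, Set.Finite.mem_toFinset]
      exact fun h => hnot h.2
    have hlevK : levsum K = ℓ + ∑ p ∈ S.erase (x, ℓ + 1), p.2 := by
      show (∑ᶠ p ∈ (insert ((x, ℓ) : V × ℕ) (L.F.verts \ {(x, ℓ + 1)})),
        (p : V × ℕ).2) = _
      rw [← hfinW.coe_toFinset, finsum_mem_coe_finset, hWfinset, Finset.sum_insert hnm]
    have hlevL : levsum L = (ℓ + 1) + ∑ p ∈ S.erase (x, ℓ + 1), p.2 := by
      show (∑ᶠ p ∈ L.F.verts, (p : V × ℕ).2) = _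
      rw [← hfinL.coe_toFinset, finsum_mem_coe_finset, ← hS,
        ← Finset.add_sum_erase S (fun p => p.2) hmemS]
    have haK : (airborneRoots K.F).ncard ≤ L.F.verts.ncard := by
      rw [← hncard]
      exact Set.ncard_le_ncard (airborne_subset _) (verts_finite K)
    rw [mu, mu, hlevK, hlevL, hncard]
    set t := ∑ p ∈ S.erase (x, ℓ + 1), p.2
    set n := L.F.verts.ncard
    calc (ℓ + t) * (n + 1) + (airborneRoots K.F).ncard
        ≤ (ℓ + t) * (n + 1) + n := by omega
      _ < (ℓ + t) * (n + 1) + (n + 1) := by omega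
      _ = (ℓ + 1 + t) * (n + 1) := by ring
      _ ≤ (ℓ + 1 + t) * (n + 1) + (airborneRoots L.F).ncard := Nat.le_add_right _ _
  · -- Used equality
    apply used_eq_of K L rfl (max (Nat.find L.finHeight) (ℓ + 2))
    · intro p hp
      rcases Set.mem_insert_iff.mp hp with rfl | ⟨hp1, -⟩
      · have := le_max_right (Nat.find L.finHeight) (ℓ + 2)
        simp only []
        omega
      · exact lt_of_lt_of_le (Nat.find_spec L.finHeight p hp1) (le_max_left _ _)
    · intro p hp
      exact lt_of_lt_of_le (Nat.find_spec L.finHeight p hp) (le_max_left _ _)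
    · intro w
      exact filterMap_swap (entry K w) (entry L w) ℓ _ (le_max_right _ _)
        (claim_out w) (claim_mid w)

lemma step (L : FinLandscape E b R) (hng : ¬ L.F.Grounded) :
    ∃ K : FinLandscape E b R,
      mu K < mu L ∧ K.F.verts.ncard = L.F.verts.ncard ∧ K.Used = L.Used := by
  classical
  rw [GForest.Grounded] at hng
  push_neg at hng
  obtain ⟨a, ha, hP, h0⟩ := hng
  obtain ⟨x, m⟩ := a
  match m, h0 with
  | 0, h0 => exact absurd rfl h0
  | ℓ + 1, h0 =>
    by_cases hc : ∃ y : V, (y, ℓ) ∈ L.F.verts ∧ Rel E y x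
    · obtain ⟨y, hy, hr⟩ := hc
      exact case1 L x y ℓ ha hP hy hr
    · push_neg at hc
      exact case2 L x ℓ ha hP hc

end Cases

end MTLLL

open MTLLL in
/-- Proposition 3.9: every finalised landscape on a finite digraph is equivalent to a
grounded one (same number of forest vertices and the same `Used` function). -/
theorem exists_equivalent_grounded_landscape
    {V : Type*} [Nonempty V] [Fintype V] (E : V → V → Prop)
    (b : ℕ) (hb : 1 < b) (R : LocalRule E b) (L : FinLandscape E b R) :
    ∃ K : FinLandscape E b R, K.F.Grounded ∧
      K.F.verts.ncard = L.F.verts.ncard ∧ K.Used = L.Used := by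
  classical
  obtain ⟨n, hn⟩ : ∃ n, mu L = n := ⟨_, rfl⟩
  induction n using Nat.strong_induction_on generalizing L with
  | _ n ih =>
    by_cases hg : L.F.Grounded
    · exact ⟨L, hg, rfl, rfl⟩
    · obtain ⟨K, hmu, hnc, hus⟩ := step L hg
      obtain ⟨K', h1, h2, h3⟩ := ih (mu K) (hn ▸ hmu) K rfl
      exact ⟨K', h1, h2.trans hnc, h3.trans hus⟩
end
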